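/- arXiv:0805.1305 — 4 statements merged into one kernel-verified Lean document; each statement's English description precedes it below -/
import Mathlib

section
/- Let f̃ ∈ 𝕂[x₁,…,xₙ] be a polynomial with tropicalization f, and let (b̃₁,…,b̃ₙ) ∈ (𝕂*)ⁿ be any point. Then there is a root (c̃₁,…,c̃ₙ) of f̃ with Pt(c̃ᵢ) = Pt(b̃ᵢ) for all 1 ≤ i ≤ n if and only if b = (T(b̃₁),…,T(b̃ₙ)) is a zero of the tropical polynomial f and (Pc(b̃₁),…,Pc(b̃ₙ)) is a root of the residual polynomial f̃_b in (k*)ⁿ. -/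
noncomputable section
open scoped Classical

/-- An algebraically closed field `K` together with a nontrivial rank-one valuation
`v : K → Γ ∪ {∞}` (written additively, with `v 0 = ⊤` and value group containing `ℚ`),
a residue field `k`, and the principal-coefficient map `Pc : K → k`,
`Pc(x₀ t^γ) = x̄₀` (`Pc 0 = 0`).  The tropicalization map is `T(x) = −v(x)`.
The axioms for `Pc` encode that `Pt(x) = Pt(y)` iff `v x = v y < v (x − y)`. -/
structure ValData (K : Type) [Field K] (k : Type) [Field k] : Type where
  /-- the valuation -/
  v : K → WithTop ℝ
  /-- the principal coefficient (residue of `x t^{v x}`) -/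
  Pc : K → k
  v_eq_top : ∀ x : K, v x = ⊤ ↔ x = 0
  v_mul : ∀ x y : K, v (x * y) = v x + v y
  v_add : ∀ x y : K, min (v x) (v y) ≤ v (x + y)
  /-- the value group contains `ℚ` (in particular the valuation is nontrivial) -/
  v_rat : ∀ q : ℚ, ∃ x : K, v x = ((q : ℝ) : WithTop ℝ)
  Pc_zero : Pc 0 = 0
  Pc_ne_zero : ∀ x : K, x ≠ 0 → Pc x ≠ 0
  Pc_one : Pc 1 = 1
  Pc_mul : ∀ x y : K, Pc (x * y) = Pc x * Pc y
  Pc_add_of_v_eq : ∀ x y : K, v x = v y → v (x + y) = v x → Pc (x + y) = Pc x + Pc y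
  Pc_add_cancel : ∀ x y : K, v x = v y → v x < v (x + y) → Pc x + Pc y = 0
  Pc_add_of_v_lt : ∀ x y : K, v x < v y → Pc (x + y) = Pc x

namespace ValData
variable {K k : Type} [Field K] [Field k] (V : ValData K k)

lemma v_zero : V.v 0 = ⊤ := (V.v_eq_top 0).mpr rfl

lemma v_ne_top {x : K} (hx : x ≠ 0) : V.v x ≠ ⊤ := fun h => hx ((V.v_eq_top x).mp h)

lemma exists_v_coe {x : K} (hx : x ≠ 0) : ∃ γ : ℝ, V.v x = (γ : WithTop ℝ) := by
  cases h : V.v x with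
  | top => exact absurd h (V.v_ne_top hx)
  | coe γ => exact ⟨γ, rfl⟩

lemma v_one : V.v 1 = 0 := by
  have h := V.v_mul 1 1
  rw [one_mul] at h
  have h1 : V.v 1 ≠ ⊤ := V.v_ne_top one_ne_zero
  cases hv : V.v 1 with
  | top => exact absurd hv h1
  | coe γ =>
    rw [hv] at h
    have : γ = γ + γ := by exact_mod_cast h
    have : γ = 0 := by linarith
    simp [this]

lemma v_neg_one : V.v (-1) = 0 := by
  have h := V.v_mul (-1) (-1)
  rw [neg_mul_neg, one_mul, V.v_one] at h
  have h1 : V.v (-1) ≠ ⊤ := V.v_ne_top (by norm_num)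
  cases hv : V.v (-1) with
  | top => exact absurd hv h1
  | coe γ =>
    rw [hv] at h
    have : (0:ℝ) = γ + γ := by exact_mod_cast h
    have : γ = 0 := by linarith
    simp [this]

lemma v_neg (x : K) : V.v (-x) = V.v x := by
  have := V.v_mul (-1) x
  rw [neg_one_mul, V.v_neg_one, zero_add] at this
  exact this

lemma Pc_neg_one : V.Pc (-1) = -1 := by
  have h := V.Pc_add_cancel 1 (-1) (by rw [V.v_one, V.v_neg_one])
    (by rw [add_neg_cancel, V.v_zero, V.v_one]; exact lt_top_iff_ne_top.mpr (by simp))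
  rw [V.Pc_one] at h
  linear_combination h

lemma v_add_eq_of_lt {x y : K} (h : V.v x < V.v y) : V.v (x + y) = V.v x := by
  refine le_antisymm ?_ ?_
  · by_contra hcon
    push_neg at hcon
    have h2 := V.v_add (x + y) (-y)
    rw [add_neg_cancel_right, V.v_neg] at h2
    have h3 : V.v x < min (V.v (x + y)) (V.v y) := lt_min hcon h
    exact absurd h2 (not_le.mpr h3)
  · have := V.v_add x y
    rwa [min_eq_left h.le] at this


lemma Pc_pow (x : K) (m : ℕ) : V.Pc (x ^ m) = V.Pc x ^ m := by
  induction m with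
  | zero => simp [V.Pc_one]
  | succ m ih => rw [pow_succ, pow_succ, V.Pc_mul, ih]

lemma Pc_prod {ι : Type*} (s : Finset ι) (f : ι → K) :
    V.Pc (∏ i ∈ s, f i) = ∏ i ∈ s, V.Pc (f i) := by
  classical
  induction s using Finset.cons_induction with
  | empty => simp [V.Pc_one]
  | cons a s ha ih => rw [Finset.prod_cons, Finset.prod_cons, V.Pc_mul, ih]

lemma v_prod {ι : Type*} (s : Finset ι) (f : ι → K) :
    V.v (∏ i ∈ s, f i) = ∑ i ∈ s, V.v (f i) := by
  classical
  induction s using Finset.cons_induction with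
  | empty => simp [V.v_one]
  | cons a s ha ih => rw [Finset.prod_cons, Finset.sum_cons, V.v_mul, ih]

lemma v_pow_coe {x : K} {γ : ℝ} (h : V.v x = (γ : WithTop ℝ)) (m : ℕ) :
    V.v (x ^ m) = (((m : ℝ) * γ : ℝ) : WithTop ℝ) := by
  induction m with
  | zero => simp [V.v_one]
  | succ m ih =>
    rw [pow_succ, V.v_mul, ih, h]
    rw [← WithTop.coe_add]
    congr 1
    push_cast
    ring

lemma v_sum_ge {ι : Type*} (s : Finset ι) (f : ι → K) (μ : WithTop ℝ)
    (h : ∀ i ∈ s, μ ≤ V.v (f i)) : μ ≤ V.v (∑ i ∈ s, f i) := by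
  classical
  induction s using Finset.cons_induction with
  | empty => simp [V.v_zero]
  | cons a s ha ih =>
    rw [Finset.sum_cons]
    refine le_trans (le_min (h a (Finset.mem_cons_self a s))
      (ih (fun i hi => h i (Finset.mem_cons.mpr (Or.inr hi))))) (V.v_add _ _)

/-- residue at level μ -/
def res (μ : ℝ) (x : K) : k := if V.v x = (μ : WithTop ℝ) then V.Pc x else 0

lemma res_eq_of_v_eq {μ : ℝ} {x : K} (h : V.v x = (μ : WithTop ℝ)) : V.res μ x = V.Pc x := by
  simp [res, h]

lemma res_eq_zero_of_v_lt {μ : ℝ} {x : K} (h : (μ : WithTop ℝ) < V.v x) : V.res μ x = 0 := by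
  simp [res, (ne_of_lt h).symm]

lemma v_eq_of_res_ne_zero {μ : ℝ} {x : K} (h : V.res μ x ≠ 0) : V.v x = (μ : WithTop ℝ) := by
  by_contra hcon; simp [res, hcon] at h

lemma res_ne_zero_of_v_eq {μ : ℝ} {x : K} (h : V.v x = (μ : WithTop ℝ)) : V.res μ x ≠ 0 := by
  rw [V.res_eq_of_v_eq h]
  exact V.Pc_ne_zero x (fun h0 => by rw [h0, V.v_zero] at h; exact (WithTop.top_ne_coe h))

lemma res_add {μ : ℝ} {x y : K} (hx : (μ : WithTop ℝ) ≤ V.v x) (hy : (μ : WithTop ℝ) ≤ V.v y) :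
    V.res μ (x + y) = V.res μ x + V.res μ y := by
  rcases eq_or_lt_of_le hx with hx | hx <;> rcases eq_or_lt_of_le hy with hy | hy
  · -- both equal μ
    rw [V.res_eq_of_v_eq hx.symm, V.res_eq_of_v_eq hy.symm]
    have hxy : V.v x = V.v y := by rw [← hx, ← hy]
    have hmin : (μ : WithTop ℝ) ≤ V.v (x + y) := by
      refine le_trans ?_ (V.v_add x y)
      rw [← hx, ← hy, min_self]
    rcases eq_or_lt_of_le hmin with h | h
    · rw [V.res_eq_of_v_eq h.symm]
      exact V.Pc_add_of_v_eq x y hxy.symm.symm (by rw [← h, hx]) ▸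
        (V.Pc_add_of_v_eq x y hxy (by rw [← hx]; exact h.symm))
    · rw [V.res_eq_zero_of_v_lt h]
      exact (V.Pc_add_cancel x y hxy (by rw [← hx]; exact h)).symm
  · -- v x = μ < v y
    rw [V.res_eq_of_v_eq hx.symm, V.res_eq_zero_of_v_lt hy, add_zero]
    have hlt : V.v x < V.v y := by rw [← hx]; exact hy
    rw [V.res_eq_of_v_eq (by rw [V.v_add_eq_of_lt hlt, ← hx]), V.Pc_add_of_v_lt x y hlt]
  · -- v y = μ < v x
    rw [V.res_eq_zero_of_v_lt hx, V.res_eq_of_v_eq hy.symm, zero_add]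
    have hlt : V.v y < V.v x := by rw [← hy]; exact hx
    rw [add_comm, V.res_eq_of_v_eq (by rw [V.v_add_eq_of_lt hlt, ← hy]), V.Pc_add_of_v_lt y x hlt]
  · rw [V.res_eq_zero_of_v_lt hx, V.res_eq_zero_of_v_lt hy, add_zero]
    exact V.res_eq_zero_of_v_lt (lt_of_lt_of_le (lt_min hx hy) (V.v_add x y))


lemma res_sum {ι : Type*} {μ : ℝ} (s : Finset ι) (f : ι → K)
    (h : ∀ i ∈ s, (μ : WithTop ℝ) ≤ V.v (f i)) :
    V.res μ (∑ i ∈ s, f i) = ∑ i ∈ s, V.res μ (f i) := by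
  classical
  induction s using Finset.cons_induction with
  | empty => simp [res, V.v_zero]
  | cons a s ha ih =>
    rw [Finset.sum_cons, Finset.sum_cons,
      V.res_add (h a (Finset.mem_cons_self a s))
        (V.v_sum_ge s f _ (fun i hi => h i (Finset.mem_cons.mpr (Or.inr hi)))),
      ih (fun i hi => h i (Finset.mem_cons.mpr (Or.inr hi)))]

lemma res_mul {μ ν : ℝ} {x y : K} (hx : (μ : WithTop ℝ) ≤ V.v x) (hy : (ν : WithTop ℝ) ≤ V.v y) :
    V.res (μ + ν) (x * y) = V.res μ x * V.res ν y := by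
  rcases eq_or_lt_of_le hx with hx' | hx' <;> rcases eq_or_lt_of_le hy with hy' | hy'
  · rw [V.res_eq_of_v_eq hx'.symm, V.res_eq_of_v_eq hy'.symm,
      V.res_eq_of_v_eq (by rw [V.v_mul, ← hx', ← hy', ← WithTop.coe_add]), V.Pc_mul]
  · rw [V.res_eq_zero_of_v_lt hy', mul_zero]
    refine V.res_eq_zero_of_v_lt ?_
    rw [V.v_mul, ← hx']
    calc ((μ + ν : ℝ) : WithTop ℝ) = (μ : WithTop ℝ) + (ν : WithTop ℝ) := by rw [← WithTop.coe_add]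
    _ < (μ : WithTop ℝ) + V.v y := by
        exact WithTop.add_lt_add_left (WithTop.coe_ne_top) hy'
  · rw [V.res_eq_zero_of_v_lt hx', zero_mul]
    refine V.res_eq_zero_of_v_lt ?_
    rw [V.v_mul, ← hy']
    calc ((μ + ν : ℝ) : WithTop ℝ) = (μ : WithTop ℝ) + (ν : WithTop ℝ) := by rw [← WithTop.coe_add]
    _ < V.v x + (ν : WithTop ℝ) := by
        exact WithTop.add_lt_add_right (WithTop.coe_ne_top) hx'
  · rw [V.res_eq_zero_of_v_lt hx', zero_mul]
    refine V.res_eq_zero_of_v_lt ?_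
    rw [V.v_mul]
    calc ((μ + ν : ℝ) : WithTop ℝ) = (μ : WithTop ℝ) + (ν : WithTop ℝ) := by rw [← WithTop.coe_add]
    _ < V.v x + (ν : WithTop ℝ) := WithTop.add_lt_add_right (WithTop.coe_ne_top) hx'
    _ ≤ V.v x + V.v y := add_le_add_right hy _

/-- the valuation ring -/
def O : Subring K where
  carrier := {x | (0 : WithTop ℝ) ≤ V.v x}
  zero_mem' := by simp [Set.mem_setOf_eq, V.v_zero]
  one_mem' := by simp [Set.mem_setOf_eq, V.v_one]
  add_mem' := by
    intro x y hx hy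
    exact le_trans (le_min hx hy) (V.v_add x y)
  mul_mem' := by
    intro x y hx hy
    simp only [Set.mem_setOf_eq, V.v_mul]
    calc (0 : WithTop ℝ) = 0 + 0 := by simp
    _ ≤ V.v x + V.v y := add_le_add hx hy
  neg_mem' := by
    intro x hx
    simpa [Set.mem_setOf_eq, V.v_neg] using hx

lemma O_coe_v {x : V.O} : (0 : WithTop ℝ) ≤ V.v (x : K) := x.2

/-- the residue homomorphism on the valuation ring -/
def phi : V.O →+* k where
  toFun x := V.res 0 (x : K)
  map_one' := by
    show V.res 0 (1 : K) = 1
    rw [V.res_eq_of_v_eq (by rw [V.v_one]; rfl), V.Pc_one]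
  map_mul' x y := by
    show V.res 0 ((x : K) * y) = V.res 0 (x : K) * V.res 0 (y : K)
    have := V.res_mul (x := (x : K)) (y := (y : K)) (by exact_mod_cast x.2) (by exact_mod_cast y.2)
    simpa using this
  map_zero' := by
    show V.res 0 (0 : K) = 0
    simp [res, V.v_zero]
  map_add' x y := by
    show V.res 0 ((x : K) + y) = V.res 0 (x : K) + V.res 0 (y : K)
    exact V.res_add (by exact_mod_cast x.2) (by exact_mod_cast y.2)


lemma Pc_neg (x : K) : V.Pc (-x) = - V.Pc x := by
  rw [show -x = (-1) * x by ring, V.Pc_mul, V.Pc_neg_one]; ring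

/-- the set of residues of units -/
def resUnits : Set k := {z | ∃ u : K, V.v u = 0 ∧ V.Pc u = z}

lemma resUnits_infinite [IsAlgClosed K] : V.resUnits.Infinite := by
  by_contra hfin
  rw [Set.not_infinite] at hfin
  set N : ℕ := hfin.toFinset.card with hN
  -- every element of resUnits satisfies z ^ Nat.factorial N = 1
  have hpow : ∀ z ∈ V.resUnits, z ^ (Nat.factorial N) = 1 := by
    intro z hz
    obtain ⟨u, hu, rfl⟩ := hz
    have hzne : V.Pc u ≠ 0 := V.Pc_ne_zero u (fun h => by
      rw [h, V.v_zero] at hu; exact WithTop.top_ne_coe hu)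
    -- pigeonhole on powers
    have hmaps : ∀ j ∈ Finset.range (N + 1), V.Pc u ^ j ∈ hfin.toFinset := by
      intro j _
      rw [Set.Finite.mem_toFinset]
      exact ⟨u ^ j, by rw [V.v_pow_coe hu]; simp, V.Pc_pow u j⟩
    have hcard : hfin.toFinset.card < (Finset.range (N + 1)).card := by
      simp [hN]
    obtain ⟨a, ha, b, hb, hab, heq⟩ :=
      Finset.exists_ne_map_eq_of_card_lt_of_maps_to hcard hmaps
    have key : ∀ a b : ℕ, a < b → b < N + 1 → V.Pc u ^ a = V.Pc u ^ b →
        V.Pc u ^ Nat.factorial N = 1 := by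
      intro a b hlt hbN heq
      have hd : V.Pc u ^ (b - a) = 1 := by
        have : V.Pc u ^ a * V.Pc u ^ (b - a) = V.Pc u ^ a * 1 := by
          rw [mul_one, ← pow_add, Nat.add_sub_cancel' hlt.le]
          exact heq.symm
        exact mul_left_cancel₀ (pow_ne_zero a hzne) this
      have h1 : 0 < b - a := by omega
      have h2 : b - a ≤ N := by omega
      have hdvd : (b - a) ∣ Nat.factorial N := Nat.dvd_factorial h1 h2
      obtain ⟨e, he⟩ := hdvd
      rw [he, pow_mul, hd, one_pow]
    rcases lt_or_gt_of_ne hab with h | h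
    · exact key a b h (Finset.mem_range.mp hb) heq
    · exact key b a h (Finset.mem_range.mp ha) heq.symm
  -- construct root of X^(N!+1) - X + 1
  set q : ℕ := Nat.factorial N + 1 with hq
  have hq2 : 2 ≤ q := by
    have := Nat.factorial_pos N; omega
  set p : Polynomial K := Polynomial.X ^ q + (Polynomial.C (-1) * Polynomial.X + Polynomial.C 1)
    with hp
  have hdeg : p.degree = q := by
    rw [hp, Polynomial.degree_add_eq_left_of_degree_lt, Polynomial.degree_X_pow]
    rw [Polynomial.degree_X_pow]
    refine lt_of_le_of_lt Polynomial.degree_linear_le ?_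
    exact_mod_cast (by omega : 1 < q)
  obtain ⟨w, hw⟩ := IsAlgClosed.exists_root (p := p) (by
    rw [hdeg]
    exact_mod_cast (by omega : q ≠ 0))
  have heval : w ^ q - w + 1 = 0 := by
    have := hw
    simp only [Polynomial.IsRoot, hp, Polynomial.eval_add, Polynomial.eval_pow,
      Polynomial.eval_X, Polynomial.eval_mul, Polynomial.eval_C] at this
    linear_combination this
  have hwne : w ≠ 0 := by
    intro h
    rw [h, zero_pow (by omega : q ≠ 0)] at heval
    simp at heval
  obtain ⟨γ, hγ⟩ := V.exists_v_coe hwne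
  have hγ0 : γ = 0 := by
    by_contra hne
    rcases lt_or_gt_of_ne hne with hneg | hpos
    · -- v w < 0 : v (w^q) strictly smallest
      have hpow : V.v (w ^ q) = (((q : ℝ) * γ : ℝ) : WithTop ℝ) := V.v_pow_coe hγ q
      have hlt : V.v (w ^ q) < V.v (-w + 1) := by
        have h1 : V.v (-w + 1) ≥ min (V.v (-w)) (V.v 1) := V.v_add _ _
        rw [V.v_neg, V.v_one, hγ] at h1
        have h2 : min ((γ : WithTop ℝ)) (0 : WithTop ℝ) = (γ : WithTop ℝ) := by
          rw [min_eq_left]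
          exact_mod_cast hneg.le
        rw [h2] at h1
        refine lt_of_lt_of_le ?_ h1
        rw [hpow]
        have hq2' : (2:ℝ) ≤ (q:ℝ) := by exact_mod_cast hq2
        exact_mod_cast (by nlinarith : (q : ℝ) * γ < γ)
      have := V.v_add_eq_of_lt hlt
      have hzero : w ^ q + (-w + 1) = 0 := by linear_combination heval
      rw [hzero, V.v_zero, hpow] at this
      exact WithTop.top_ne_coe this
    · -- v w > 0
      have hpow : V.v (w ^ q) = (((q : ℝ) * γ : ℝ) : WithTop ℝ) := V.v_pow_coe hγ q
      have hgt : V.v 1 < V.v (w ^ q - w) := by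
        rw [V.v_one, sub_eq_add_neg]
        refine lt_of_lt_of_le ?_ (V.v_add (w ^ q) (-w))
        rw [hpow, V.v_neg, hγ]
        refine lt_min ?_ ?_
        · have hq2' : (2:ℝ) ≤ (q:ℝ) := by exact_mod_cast hq2
          exact_mod_cast (by nlinarith : (0:ℝ) < (q : ℝ) * γ)
        · exact_mod_cast hpos
      have := V.v_add_eq_of_lt hgt
      have hzero : (1 : K) + (w ^ q - w) = 0 := by linear_combination heval
      rw [hzero, V.v_zero, V.v_one] at this
      exact absurd this (by simp)
  rw [hγ0] at hγ
  have hζS : V.Pc w ∈ V.resUnits := ⟨w, by rw [hγ, WithTop.coe_zero], rfl⟩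
  have hzN : V.Pc w ^ Nat.factorial N = 1 := hpow _ hζS
  have hvq : V.v (w ^ q) = ((0 : ℝ) : WithTop ℝ) := by
    rw [V.v_pow_coe hγ q]
    norm_num
  have hsum : w ^ q + (-w) = -1 := by linear_combination heval
  have hPc : V.Pc (-1 : K) = V.Pc (w ^ q) + V.Pc (-w) := by
    rw [← hsum]
    refine V.Pc_add_of_v_eq _ _ ?_ ?_
    · rw [hvq, V.v_neg, hγ]
    · rw [hsum, V.v_neg_one, hvq, WithTop.coe_zero]
  rw [V.Pc_neg_one, V.Pc_pow, V.Pc_neg, hq, pow_succ, hzN, one_mul] at hPc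
  have : (-1 : k) = 0 := by linear_combination hPc
  exact absurd this (by simp)


lemma v_multiset_prod (s : Multiset K) : V.v s.prod = (s.map V.v).sum := by
  induction s using Multiset.induction_on with
  | empty => simp [V.v_one]
  | cons a s ih => simp [V.v_mul, ih]

lemma v_multiset_sum_ge (s : Multiset K) (μ : WithTop ℝ) (h : ∀ x ∈ s, μ ≤ V.v x) :
    μ ≤ V.v s.sum := by
  induction s using Multiset.induction_on with
  | empty => simp [V.v_zero]
  | cons a s ih =>
    rw [Multiset.sum_cons]
    refine le_trans (le_min (h a (Multiset.mem_cons_self a s))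
      (ih (fun x hx => h x (Multiset.mem_cons_of_mem hx)))) (V.v_add _ _)

lemma multiset_sum_nonpos : ∀ (s : Multiset (WithTop ℝ)), (∀ x ∈ s, x ≤ 0) → s.sum ≤ 0 := by
  intro s
  induction s using Multiset.induction_on with
  | empty => intro _; simp
  | cons a s ih =>
    intro h
    rw [Multiset.sum_cons]
    calc a + s.sum ≤ 0 + 0 :=
          add_le_add (h a (Multiset.mem_cons_self a s)) (ih (fun x hx => h x (Multiset.mem_cons_of_mem hx)))
      _ = 0 := by simp

lemma exists_root_v_pos [IsAlgClosed K] (Q : Polynomial K) (h0 : Q.coeff 0 ≠ 0)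
    (m : ℕ) (hm : V.v (Q.coeff m) < V.v (Q.coeff 0)) :
    ∃ y : K, Q.eval y = 0 ∧ 0 < V.v y := by
  classical
  by_contra hcon
  push_neg at hcon
  have hroots : ∀ r ∈ Q.roots, V.v r ≤ 0 := fun r hr =>
    hcon r (Polynomial.isRoot_of_mem_roots hr)
  have hs : Polynomial.Splits Q := IsAlgClosed.splits Q
  have hfact := Polynomial.Splits.eq_prod_roots hs
  have hcard := (Polynomial.splits_iff_card_roots).mp hs
  set SV : WithTop ℝ := (Q.roots.map V.v).sum with hSV
  -- Claim 1 : v (coeff 0) = v lead + SV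
  have hcoeff0 : V.v (Q.coeff 0) = V.v Q.leadingCoeff + SV := by
    conv_lhs => rw [Polynomial.coeff_zero_eq_eval_zero, hfact]
    rw [Polynomial.eval_mul, Polynomial.eval_C, Polynomial.eval_multiset_prod, V.v_mul]
    congr 1
    rw [Multiset.map_map, V.v_multiset_prod, Multiset.map_map]
    congr 1
    refine Multiset.map_congr rfl (fun r hr => ?_)
    simp [V.v_neg]
  -- Claim 2 : lower bound for all coefficients
  have hbound : ∀ m' : ℕ, V.v Q.leadingCoeff + SV ≤ V.v (Q.coeff m') := by
    intro m'
    rcases le_or_gt m' Q.natDegree with hle | hgt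
    · have hle' : m' ≤ Multiset.card Q.roots := by rw [hcard]; exact hle
      have hc : Q.coeff m' = Q.leadingCoeff *
          ((Q.roots.map (fun a => Polynomial.X - Polynomial.C a)).prod.coeff m') := by
        conv_lhs => rw [hfact]
        rw [Polynomial.coeff_C_mul]
      rw [hc, Multiset.prod_X_sub_C_coeff Q.roots hle', V.v_mul, V.v_mul]
      have hv1 : V.v ((-1 : K) ^ (Multiset.card Q.roots - m')) = 0 := by
        rw [V.v_pow_coe (by rw [V.v_neg_one, WithTop.coe_zero] : V.v (-1 : K) = ((0:ℝ) : WithTop ℝ))]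
        norm_num
      rw [hv1, zero_add]
      refine add_le_add_right ?_ _
      -- v (esymm) ≥ SV
      rw [Multiset.esymm]
      refine V.v_multiset_sum_ge _ _ ?_
      intro x hx
      obtain ⟨t, ht, rfl⟩ := Multiset.mem_map.mp hx
      obtain ⟨hts, _⟩ := Multiset.mem_powersetCard.mp ht
      rw [V.v_multiset_prod]
      have hsplit : Q.roots = t + (Q.roots - t) := by
        rw [add_comm]
        exact (tsub_add_cancel_of_le hts).symm
      have : SV = (t.map V.v).sum + ((Q.roots - t).map V.v).sum := by
        rw [hSV]
        conv_lhs => rw [hsplit]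
        rw [Multiset.map_add, Multiset.sum_add]
      rw [this]
      have hnp : ((Q.roots - t).map V.v).sum ≤ 0 :=
        multiset_sum_nonpos _ (by
          intro x hx
          obtain ⟨r, hr, rfl⟩ := Multiset.mem_map.mp hx
          exact hroots r (Multiset.mem_of_le (tsub_le_self) hr))
      calc (t.map V.v).sum + ((Q.roots - t).map V.v).sum ≤ (t.map V.v).sum + 0 :=
            add_le_add_right hnp _
        _ = (t.map V.v).sum := by simp
    · rw [Polynomial.coeff_eq_zero_of_natDegree_lt hgt, V.v_zero]
      exact le_top
  exact absurd (hcoeff0 ▸ hbound m) (not_le.mpr hm)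

end ValData

lemma exists_mem_eval_ne_zero {k : Type} [Field k] {p : Polynomial k} (hp : p ≠ 0)
    {S : Set k} (hS : S.Infinite) : ∃ z ∈ S, p.eval z ≠ 0 := by
  obtain ⟨z, hz⟩ := (hS.diff (Polynomial.finite_setOf_isRoot hp)).nonempty
  exact ⟨z, hz.1, hz.2⟩

lemma base_repr_inj : ∀ (n : ℕ) (D : ℕ) (i i' : Fin n → ℕ), (∀ j, i j ≤ D) → (∀ j, i' j ≤ D) →
    (∑ j, i j * (D+1)^(j : ℕ)) = (∑ j, i' j * (D+1)^(j : ℕ)) → i = i' := by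
  intro n
  induction n with
  | zero => intro D i i' _ _ _; funext j; exact absurd j.2 (by omega)
  | succ n ih =>
    intro D i i' hi hi' heq
    rw [Fin.sum_univ_succ, Fin.sum_univ_succ] at heq
    have hfac : ∀ (f : Fin (n+1) → ℕ),
        (∑ j : Fin n, f j.succ * (D+1)^((j.succ : Fin (n+1)) : ℕ)) =
          (D+1) * ∑ j : Fin n, f j.succ * (D+1)^(j : ℕ) := by
      intro f
      rw [Finset.mul_sum]
      refine Finset.sum_congr rfl (fun j _ => ?_)
      rw [Fin.val_succ, pow_succ]
      ring
    rw [hfac i, hfac i'] at heq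
    simp only [Fin.val_zero, pow_zero, mul_one] at heq
    set s := ∑ j : Fin n, i j.succ * (D+1)^(j : ℕ) with hs
    set s' := ∑ j : Fin n, i' j.succ * (D+1)^(j : ℕ) with hs'
    have h0 : i 0 = i' 0 := by
      have h1 : (i 0 + (D+1) * s) % (D+1) = i 0 := by
        rw [Nat.add_mul_mod_self_left]
        exact Nat.mod_eq_of_lt (by have := hi 0; omega)
      have h2 : (i' 0 + (D+1) * s') % (D+1) = i' 0 := by
        rw [Nat.add_mul_mod_self_left]
        exact Nat.mod_eq_of_lt (by have := hi' 0; omega)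
      rw [← h1, ← h2, heq]
    have hss : s = s' := by
      have : (D+1) * s = (D+1) * s' := by omega
      exact Nat.eq_of_mul_eq_mul_left (by omega) this
    have htail : (fun j : Fin n => i j.succ) = (fun j : Fin n => i' j.succ) :=
      ih D _ _ (fun j => hi j.succ) (fun j => hi' j.succ) (by rw [← hs, ← hs', hss])
    funext j
    induction j using Fin.cases with
    | zero => exact h0
    | succ j => exact congrFun htail j

/-- **Theorem 1, constructive lifting / Kapranov.**
Let `f̃ = Σ_{i ∈ I} c_i x^i ∈ 𝕂[x₁,…,xₙ]` (all `c_i ≠ 0`, `I ≠ ∅`) have tropicalization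
`f = "Σ_{i ∈ I} a_i x^i"` (i.e. `v (c_i) = −a_i`), and let `b̃ ∈ (𝕂*)ⁿ` be any point, with
`b = T(b̃)` (i.e. `v (b̃_j) = −b_j`).  Then `f̃` has a root `c̃ ∈ (𝕂*)ⁿ` with
`Pt(c̃_j) = Pt(b̃_j)` for all `j` (i.e. `v c̃_j = v b̃_j < v (c̃_j − b̃_j)`) if and only if
`b` is a zero of the tropical polynomial `f` (the maximum `max_{i ∈ I} (a_i + i·b)` is
attained at least twice) and `(Pc(b̃₁),…,Pc(b̃ₙ))` is a root of the residual polynomial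
`f̃_b = Σ_{i ∈ J} Pc(c_i) x^i` of `f̃` over `b` (where `J` is the set of indices attaining
the maximum). -/
theorem lifting_root_iff_tropical_root_and_residual_root
    {K k : Type} [Field K] [IsAlgClosed K] [Field k] (V : ValData K k)
    (n : ℕ) (I : Finset (Fin n → ℕ)) (hI : I.Nonempty)
    (c : (Fin n → ℕ) → K) (hc : ∀ i ∈ I, c i ≠ 0)
    (a : (Fin n → ℕ) → ℝ) (ha : ∀ i ∈ I, V.v (c i) = ((-(a i) : ℝ) : WithTop ℝ))
    (btil : Fin n → K) (hb : ∀ j, btil j ≠ 0)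
    (b : Fin n → ℝ) (hvb : ∀ j, V.v (btil j) = ((-(b j) : ℝ) : WithTop ℝ)) :
    (∃ ctil : Fin n → K,
        (∑ i ∈ I, c i * ∏ j, ctil j ^ i j) = 0 ∧
        ∀ j, ctil j ≠ 0 ∧ V.v (ctil j) = V.v (btil j) ∧
          V.v (btil j) < V.v (ctil j - btil j)) ↔
      ((∃ i ∈ I, ∃ i' ∈ I, i ≠ i' ∧
          (a i + ∑ j, (i j : ℝ) * b j) = (a i' + ∑ j, (i' j : ℝ) * b j) ∧
          ∀ l ∈ I, (a l + ∑ j, (l j : ℝ) * b j) ≤ (a i + ∑ j, (i j : ℝ) * b j)) ∧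
        (∑ i ∈ I.filter (fun i => ∀ l ∈ I,
              (a l + ∑ j, (l j : ℝ) * b j) ≤ (a i + ∑ j, (i j : ℝ) * b j)),
            V.Pc (c i) * ∏ j, V.Pc (btil j) ^ i j) = 0) := by
  classical
  set w : (Fin n → ℕ) → ℝ := fun i => a i + ∑ j, (i j : ℝ) * b j with hwdef
  obtain ⟨i₀, hi₀I, hi₀max⟩ := Finset.exists_max_image I w hI
  set W : ℝ := w i₀ with hWdef
  set J : Finset (Fin n → ℕ) := I.filter (fun i => ∀ l ∈ I, w l ≤ w i) with hJdef
  have hi₀J : i₀ ∈ J := Finset.mem_filter.mpr ⟨hi₀I, hi₀max⟩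
  have hJI : J ⊆ I := Finset.filter_subset _ _
  have hwJ : ∀ i ∈ J, w i = W := fun i hi => le_antisymm
    (hi₀max i (hJI hi)) ((Finset.mem_filter.mp hi).2 i₀ hi₀I)
  set A : (Fin n → ℕ) → k := fun i => V.Pc (c i) * ∏ j, V.Pc (btil j) ^ i j with hAdef
  have hAne : ∀ i ∈ I, A i ≠ 0 := by
    intro i hiI
    refine mul_ne_zero (V.Pc_ne_zero _ (hc i hiI)) (Finset.prod_ne_zero_iff.mpr ?_)
    intro j _
    exact pow_ne_zero _ (V.Pc_ne_zero _ (hb j))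
  -- valuation of a term of the polynomial at a point with the valuations of btil
  have hvT : ∀ (x : Fin n → K), (∀ j, V.v (x j) = ((-(b j) : ℝ) : WithTop ℝ)) →
      ∀ i ∈ I, V.v (c i * ∏ j, x j ^ i j) = ((-(w i) : ℝ) : WithTop ℝ) := by
    intro x hx i hiI
    rw [V.v_mul, V.v_prod, ha i hiI]
    rw [Finset.sum_congr rfl (fun j _ => V.v_pow_coe (hx j) (i j)), ← WithTop.coe_sum,
      ← WithTop.coe_add]
    congr 1
    have : ∑ j, (i j : ℝ) * -(b j) = -∑ j, (i j : ℝ) * b j := by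
      rw [← Finset.sum_neg_distrib]
      exact Finset.sum_congr rfl (fun j _ => by ring)
    rw [this, hwdef]
    ring
  constructor
  · rintro ⟨ct, hsum0, hct⟩
    have hctne : ∀ j, ct j ≠ 0 := fun j => (hct j).1
    have hvct : ∀ j, V.v (ct j) = ((-(b j) : ℝ) : WithTop ℝ) := by
      intro j; rw [(hct j).2.1, hvb j]
    have hPcct : ∀ j, V.Pc (ct j) = V.Pc (btil j) := by
      intro j
      have h2 := V.Pc_add_of_v_lt (btil j) (ct j - btil j) (hct j).2.2
      rw [add_sub_cancel] at h2
      rw [h2]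
    have hTv := hvT ct hvct
    have hle : ∀ i ∈ I, ((-W : ℝ) : WithTop ℝ) ≤ V.v (c i * ∏ j, ct j ^ i j) := by
      intro i hi
      rw [hTv i hi]
      exact_mod_cast neg_le_neg (hi₀max i hi)
    have hres0 : (∑ i ∈ I, V.res (-W) (c i * ∏ j, ct j ^ i j)) = 0 := by
      rw [← V.res_sum I _ hle, hsum0]
      exact V.res_eq_zero_of_v_lt (by rw [V.v_zero]; exact WithTop.coe_lt_top _)
    have hsplit : (∑ i ∈ I, V.res (-W) (c i * ∏ j, ct j ^ i j)) = ∑ i ∈ J, A i := by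
      rw [hJdef, Finset.sum_filter]
      refine Finset.sum_congr rfl (fun i hiI => ?_)
      by_cases hPi : ∀ l ∈ I, w l ≤ w i
      · have hiJ : i ∈ J := Finset.mem_filter.mpr ⟨hiI, hPi⟩
        have hwi : w i = W := hwJ i hiJ
        rw [if_pos hPi, V.res_eq_of_v_eq (by rw [hTv i hiI, hwi]), V.Pc_mul, V.Pc_prod, hAdef]
        congr 1
        exact Finset.prod_congr rfl (fun j _ => by rw [V.Pc_pow, hPcct j])
      · have hwi : w i < W := by
          push_neg at hPi
          obtain ⟨l, hlI, hl⟩ := hPi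
          exact lt_of_lt_of_le hl (hi₀max l hlI)
        rw [if_neg (by push_neg; push_neg at hPi; exact hPi)]
        refine V.res_eq_zero_of_v_lt ?_
        rw [hTv i hiI]
        exact_mod_cast neg_lt_neg hwi
    have hJ0 : (∑ i ∈ J, A i) = 0 := by rw [← hsplit, hres0]
    refine ⟨?_, hJ0⟩
    -- two distinct maximizers
    have hex : ∃ i' ∈ J, i' ≠ i₀ := by
      by_contra hcon
      push_neg at hcon
      have hJsing : J = {i₀} := by
        apply Finset.eq_singleton_iff_unique_mem.mpr
        exact ⟨hi₀J, fun x hx => hcon x hx⟩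
      rw [hJsing, Finset.sum_singleton] at hJ0
      exact hAne i₀ hi₀I hJ0
    obtain ⟨i', hi'J, hi'ne⟩ := hex
    refine ⟨i₀, hi₀I, i', hJI hi'J, hi'ne.symm, ?_, hi₀max⟩
    show w i₀ = w i'
    rw [hwJ i' hi'J]
  · rintro ⟨-, hres⟩
    by_cases hzero : (∑ i ∈ I, c i * ∏ j, btil j ^ i j) = 0
    · refine ⟨btil, hzero, fun j => ⟨hb j, rfl, ?_⟩⟩
      rw [sub_self, V.v_zero, hvb j]
      exact WithTop.coe_lt_top _
    -- setup : bound on exponents and base-(D+1) degrees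
    set D : ℕ := I.sup (fun i => Finset.univ.sup i) with hDdef
    have hD : ∀ i ∈ I, ∀ j, i j ≤ D := by
      intro i hiI j
      exact le_trans (Finset.le_sup (Finset.mem_univ j)) (Finset.le_sup hiI)
    set M : Fin n → ℕ := fun j => (D+1)^(j:ℕ) with hMdef
    set d : (Fin n → ℕ) → ℕ := fun i => ∑ j, i j * M j with hddef
    have hdinj : ∀ i ∈ I, ∀ i' ∈ I, d i = d i' → i = i' := by
      intro i hi i' hi' hd
      exact base_repr_inj n D i i' (hD i hi) (hD i' hi') hd
    obtain ⟨it, hitJ, hitmax⟩ := Finset.exists_max_image J d ⟨i₀, hi₀J⟩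
    -- the auxiliary polynomial over k whose nonvanishing we need
    set p : Polynomial k := ∑ i ∈ J, Polynomial.C (A i) *
      ∏ j, (1 + Polynomial.X ^ M j) ^ i j with hpdef
    have hM1 : ∀ j : Fin n, 1 ≤ M j := fun j => Nat.one_le_pow _ _ (by omega)
    have hBmonic : ∀ i : Fin n → ℕ,
        (∏ j, ((1 : Polynomial k) + Polynomial.X ^ M j) ^ i j).Monic ∧
        (∏ j, ((1 : Polynomial k) + Polynomial.X ^ M j) ^ i j).natDegree = d i := by
      intro i
      have hfm : ∀ j : Fin n, ((1 : Polynomial k) + Polynomial.X ^ M j).Monic := by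
        intro j
        have h0 : (Polynomial.degree (1 : Polynomial k)) < (M j : WithBot ℕ) :=
          lt_of_le_of_lt Polynomial.degree_one_le
            (by exact_mod_cast hM1 j)
        have := Polynomial.monic_X_pow_add (p := (1 : Polynomial k)) h0
        rwa [add_comm] at this
      have hfd : ∀ j : Fin n, ((1 : Polynomial k) + Polynomial.X ^ M j).natDegree = M j := by
        intro j
        rw [add_comm]
        have := Polynomial.natDegree_X_pow_add_C (R := k) (n := M j) (r := 1)
        rwa [Polynomial.C_1] at this
      constructor
      · exact Polynomial.monic_prod_of_monic _ _ (fun j _ => (hfm j).pow _)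
      · rw [Polynomial.natDegree_prod _ _ (fun j _ => ((hfm j).pow _).ne_zero)]
        exact Finset.sum_congr rfl (fun j _ => by
          rw [Polynomial.natDegree_pow, hfd j, mul_comm])
    have hpcoeff : p.coeff (d it) = A it := by
      rw [hpdef, Polynomial.finset_sum_coeff]
      rw [Finset.sum_eq_single it]
      · rw [Polynomial.coeff_C_mul, ← (hBmonic it).2]
        rw [(hBmonic it).1.coeff_natDegree, mul_one]
      · intro i hiJ hine
        rw [Polynomial.coeff_C_mul]
        have hlt : d i < d it := by
          refine lt_of_le_of_ne (hitmax i hiJ) (fun h => hine ?_)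
          exact hdinj i (hJI hiJ) it (hJI hitJ) h
        rw [Polynomial.coeff_eq_zero_of_natDegree_lt (by rw [(hBmonic i).2]; exact hlt),
          mul_zero]
      · intro h
        exact absurd hitJ h
    have hpne : p ≠ 0 := by
      intro h
      refine hAne it (hJI hitJ) ?_
      rw [← hpcoeff, h, Polynomial.coeff_zero]
    -- choose ζ a residue of a unit avoiding the roots of p
    obtain ⟨ζ, hζS, hζ⟩ := exists_mem_eval_ne_zero hpne V.resUnits_infinite
    obtain ⟨u, hu0, hPcu⟩ := hζS
    have hu0' : V.v u = ((0:ℝ) : WithTop ℝ) := by rw [hu0, WithTop.coe_zero]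
    have hvuM : ∀ j : Fin n, V.v (u ^ M j) = ((0:ℝ) : WithTop ℝ) := by
      intro j
      rw [V.v_pow_coe hu0', mul_zero]
    have hPcuM : ∀ j : Fin n, V.Pc (u ^ M j) = ζ ^ M j := by
      intro j
      rw [V.Pc_pow, hPcu]
    -- the residual perturbation polynomial
    set Phi : Polynomial k := ∑ i ∈ J, Polynomial.C (A i) *
      ∏ j, (1 + Polynomial.C (ζ ^ M j) * Polynomial.X) ^ i j with hPhidef
    have hPhi1 : Phi.eval 1 = p.eval ζ := by
      rw [hPhidef, hpdef, Polynomial.eval_finset_sum, Polynomial.eval_finset_sum]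
      refine Finset.sum_congr rfl (fun i _ => ?_)
      simp [Polynomial.eval_prod]
    have hPhine : Phi ≠ 0 := by
      intro h
      rw [h, Polynomial.eval_zero] at hPhi1
      exact hζ hPhi1.symm
    have hPhi0 : Phi.coeff 0 = 0 := by
      have hstep : Phi.coeff 0 = ∑ i ∈ J, A i := by
        rw [Polynomial.coeff_zero_eq_eval_zero, hPhidef, Polynomial.eval_finset_sum]
        refine Finset.sum_congr rfl (fun i _ => ?_)
        simp [Polynomial.eval_prod]
      rw [hstep]
      exact hres
    obtain ⟨m, hm⟩ : ∃ m, Phi.coeff m ≠ 0 := by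
      by_contra hcon
      push_neg at hcon
      exact hPhine (Polynomial.ext hcon)
    have hm0 : m ≠ 0 := fun h => hm (h ▸ hPhi0)
    -- the perturbation polynomial over K
    set T : (Fin n → ℕ) → K := fun i => c i * ∏ j, btil j ^ i j with hTdef
    set Q : Polynomial K := ∑ i ∈ I, Polynomial.C (T i) *
      ∏ j, (1 + Polynomial.C (u ^ M j) * Polynomial.X) ^ i j with hQdef
    have hQ0 : Q.coeff 0 = ∑ i ∈ I, T i := by
      rw [Polynomial.coeff_zero_eq_eval_zero, hQdef, Polynomial.eval_finset_sum]
      refine Finset.sum_congr rfl (fun i _ => ?_)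
      simp [Polynomial.eval_prod]
    have hQ0ne : Q.coeff 0 ≠ 0 := by rw [hQ0]; exact hzero
    -- integral model of the product factors
    set uO : Fin n → V.O := fun j => ⟨u ^ M j, by
      show (0 : WithTop ℝ) ≤ V.v (u ^ M j)
      rw [hvuM j, WithTop.coe_zero]⟩ with huOdef
    set G : (Fin n → ℕ) → Polynomial V.O := fun i =>
      ∏ j, (1 + Polynomial.C (uO j) * Polynomial.X) ^ i j with hGdef
    have hGK : ∀ i, (G i).map (V.O.subtype) =
        ∏ j, (1 + Polynomial.C (u ^ M j) * Polynomial.X) ^ i j := by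
      intro i
      rw [hGdef]
      simp [huOdef, Polynomial.map_prod, Polynomial.map_pow, Polynomial.map_add, Polynomial.map_mul]
    have hGk : ∀ i, (G i).map V.phi =
        ∏ j, (1 + Polynomial.C (ζ ^ M j) * Polynomial.X) ^ i j := by
      intro i
      rw [hGdef]
      simp only [Polynomial.map_prod, Polynomial.map_pow, Polynomial.map_add,
        Polynomial.map_mul, Polynomial.map_one, Polynomial.map_C, Polynomial.map_X]
      refine Finset.prod_congr rfl (fun j _ => ?_)
      have huj : V.phi (uO j) = ζ ^ M j := by
        show V.res 0 ((uO j : K)) = ζ ^ M j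
        rw [V.res_eq_of_v_eq (by exact hvuM j), hPcuM j]
      rw [huj]
    -- coefficients of the factors lie in O
    have hEv : ∀ (i : Fin n → ℕ) (m' : ℕ), (0 : WithTop ℝ) ≤
        V.v ((∏ j, (1 + Polynomial.C (u ^ M j) * Polynomial.X) ^ i j).coeff m') := by
      intro i m'
      rw [← hGK i, Polynomial.coeff_map]
      exact ((G i).coeff m').2
    have hEres : ∀ (i : Fin n → ℕ) (m' : ℕ),
        V.res 0 ((∏ j, (1 + Polynomial.C (u ^ M j) * Polynomial.X) ^ i j).coeff m')
        = (∏ j, (1 + Polynomial.C (ζ ^ M j) * Polynomial.X) ^ i j).coeff m' := by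
      intro i m'
      rw [← hGK i, Polynomial.coeff_map, ← hGk i, Polynomial.coeff_map]
      rfl
    have hQcoeff : ∀ m' : ℕ, Q.coeff m' = ∑ i ∈ I, T i *
        ((∏ j, (1 + Polynomial.C (u ^ M j) * Polynomial.X) ^ i j).coeff m') := by
      intro m'
      rw [hQdef, Polynomial.finset_sum_coeff]
      exact Finset.sum_congr rfl (fun i _ => Polynomial.coeff_C_mul _)
    have hTvb : ∀ i ∈ I, V.v (T i) = ((-(w i) : ℝ) : WithTop ℝ) := fun i hi => hvT btil hvb i hi
    have htermv : ∀ (m' : ℕ), ∀ i ∈ I, ((-W : ℝ) : WithTop ℝ) ≤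
        V.v (T i * ((∏ j, (1 + Polynomial.C (u ^ M j) * Polynomial.X) ^ i j).coeff m')) := by
      intro m' i hi
      rw [V.v_mul]
      have hW0 : ((-W : ℝ) : WithTop ℝ) = ((-W : ℝ) : WithTop ℝ) + 0 := by rw [add_zero]
      rw [hW0]
      refine add_le_add ?_ (hEv i m')
      rw [hTvb i hi]
      exact_mod_cast neg_le_neg (hi₀max i hi)
    have hkey : ∀ m' : ℕ, V.res (-W) (Q.coeff m') = Phi.coeff m' := by
      intro m'
      rw [hQcoeff m', V.res_sum I _ (htermv m'), hPhidef, Polynomial.finset_sum_coeff,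
        hJdef, Finset.sum_filter]
      refine Finset.sum_congr rfl (fun i hiI => ?_)
      have hrm : V.res (-W) (T i * ((∏ j, (1 + Polynomial.C (u ^ M j) * Polynomial.X) ^ i j).coeff m'))
          = V.res (-W) (T i) * V.res 0
            ((∏ j, (1 + Polynomial.C (u ^ M j) * Polynomial.X) ^ i j).coeff m') := by
        have hres' := V.res_mul (μ := -W) (ν := 0) (x := T i)
          (y := (∏ j, (1 + Polynomial.C (u ^ M j) * Polynomial.X) ^ i j).coeff m')
          (by rw [hTvb i hiI]; exact_mod_cast neg_le_neg (hi₀max i hiI)) (hEv i m')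
        rwa [add_zero] at hres'
      rw [hrm]
      by_cases hPi : ∀ l ∈ I, w l ≤ w i
      · rw [if_pos hPi, Polynomial.coeff_C_mul]
        have hwi : w i = W := hwJ i (Finset.mem_filter.mpr ⟨hiI, hPi⟩)
        congr 1
        · rw [V.res_eq_of_v_eq (by rw [hTvb i hiI, hwi])]
          show V.Pc (c i * ∏ j, btil j ^ i j) = A i
          rw [V.Pc_mul, V.Pc_prod, hAdef]
          exact congrArg (V.Pc (c i) * ·) (Finset.prod_congr rfl (fun j _ => V.Pc_pow _ _))
        · exact hEres i m'
      · rw [if_neg hPi]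
        have hwi : w i < W := by
          push_neg at hPi
          obtain ⟨l, hlI, hl⟩ := hPi
          exact lt_of_lt_of_le hl (hi₀max l hlI)
        rw [V.res_eq_zero_of_v_lt (by rw [hTvb i hiI]; exact_mod_cast neg_lt_neg hwi), zero_mul]
    have hQbound : ∀ m' : ℕ, ((-W : ℝ) : WithTop ℝ) ≤ V.v (Q.coeff m') := by
      intro m'
      rw [hQcoeff m']
      exact V.v_sum_ge _ _ _ (htermv m')
    have hQm : V.v (Q.coeff m) = ((-W : ℝ) : WithTop ℝ) :=
      V.v_eq_of_res_ne_zero (by rw [hkey m]; exact hm)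
    have hQlt : V.v (Q.coeff m) < V.v (Q.coeff 0) := by
      rw [hQm]
      rcases eq_or_lt_of_le (hQbound 0) with he | hl
      · exact absurd ((hkey 0).trans hPhi0) (V.res_ne_zero_of_v_eq he.symm)
      · exact hl
    obtain ⟨y, hyroot, hyv⟩ := V.exists_root_v_pos Q hQ0ne m hQlt
    have hyne : y ≠ 0 := by
      intro h
      rw [h, ← Polynomial.coeff_zero_eq_eval_zero] at hyroot
      exact hQ0ne hyroot
    obtain ⟨γy, hγy⟩ := V.exists_v_coe hyne
    have hγypos : (0 : ℝ) < γy := by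
      rw [hγy] at hyv
      exact_mod_cast hyv
    have hz : ∀ j : Fin n, V.v (u ^ M j * y) = ((γy : ℝ) : WithTop ℝ) := by
      intro j
      rw [V.v_mul, hvuM j, hγy, WithTop.coe_zero, zero_add]
    have h1z : ∀ j : Fin n, V.v ((1 : K) + u ^ M j * y) = V.v (1 : K) :=
      fun j => V.v_add_eq_of_lt (by rw [V.v_one, hz j]; exact_mod_cast hγypos)
    have h1zne : ∀ j : Fin n, (1 : K) + u ^ M j * y ≠ 0 := by
      intro j h
      have h2 := h1z j
      rw [h, V.v_zero, V.v_one] at h2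
      simp at h2
    refine ⟨fun j => btil j * (1 + u ^ M j * y), ?_, ?_⟩
    · have hev : Q.eval y = ∑ i ∈ I, T i * ∏ j, ((1 : K) + u ^ M j * y) ^ i j := by
        rw [hQdef, Polynomial.eval_finset_sum]
        refine Finset.sum_congr rfl (fun i _ => ?_)
        simp [Polynomial.eval_prod]
      calc ∑ i ∈ I, c i * ∏ j, (btil j * (1 + u ^ M j * y)) ^ i j
          = ∑ i ∈ I, T i * ∏ j, ((1 : K) + u ^ M j * y) ^ i j := by
            refine Finset.sum_congr rfl (fun i _ => ?_)
            rw [hTdef]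
            simp only [mul_pow, Finset.prod_mul_distrib]
            ring
        _ = Q.eval y := hev.symm
        _ = 0 := hyroot
    · intro j
      refine ⟨mul_ne_zero (hb j) (h1zne j), ?_, ?_⟩
      · rw [V.v_mul, h1z j, V.v_one, add_zero]
      · have hdiff : btil j * (1 + u ^ M j * y) - btil j = btil j * (u ^ M j * y) := by ring
        rw [hdiff, V.v_mul, hz j, hvb j]
        calc ((-b j : ℝ) : WithTop ℝ) = ((-b j : ℝ) : WithTop ℝ) + 0 := by rw [add_zero]
          _ < ((-b j : ℝ) : WithTop ℝ) + ((γy : ℝ) : WithTop ℝ) := by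
              refine WithTop.add_lt_add_left (WithTop.coe_ne_top) ?_
              exact_mod_cast hγypos
end
end

section
/- Let f be a tropical polynomial in n variables with Newton polytope Δ and induced regular subdivision Subdiv(Δ). Then there is a bijection Λ ↦ V^Λ between the cells of Subdiv(Δ) and the cells of the polyhedral complex 𝒯(f) (together with the connected components of ℝⁿ ∖ closure(𝒯(f))) such that: every k-dimensional cell Λ corresponds to a cell V^Λ of dimension n−k whose affine span is orthogonal to Λ (for k = 0, V^Λ is a connected component of ℝⁿ ∖ closure(𝒯(f))); Λ₁ ≠ Λ₂ implies V^{Λ₁} ∩ V^{Λ₂} = ∅; Λ₁ ⊂ closure(Λ₂) implies V^{Λ₂} ⊂ closure(V^{Λ₁}); 𝒯(f) is the disjoint union of the V^Λ over cells Λ of positive dimension; and V^Λ is unbounded if and only if Λ ⊆ ∂Δ. -/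
noncomputable section
open scoped Classical

/-- The value of the monomial `i` of the tropical polynomial `(I, a)` in `n` variables at
the point `x ∈ ℝⁿ`. -/
def tvalN (n : ℕ) (a : (Fin n → ℕ) → ℝ) (i : Fin n → ℕ) (x : Fin n → ℝ) : ℝ :=
  a i + ∑ j, (i j : ℝ) * x j

/-- The set of zeroes of the tropical polynomial `(I, a)`: the points where the maximum
`max_{i ∈ I} (a_i + i·x)` is attained for at least two indices. -/
def tropSetN (n : ℕ) (I : Finset (Fin n → ℕ)) (a : (Fin n → ℕ) → ℝ) : Set (Fin n → ℝ) :=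
  {x | ∃ i ∈ I, ∃ j ∈ I, i ≠ j ∧ tvalN n a i x = tvalN n a j x ∧
    ∀ l ∈ I, tvalN n a l x ≤ tvalN n a i x}

/-- The cell of the regular subdivision `Subdiv(Δ)` induced by `(I, a)` that is dual to the
cell (of the curve or of the complement) containing `x`: the convex hull of the set of
monomials attaining the maximum at `x`.  The cells of `Subdiv(Δ)` are exactly the sets of
this form. -/
def cellAt (n : ℕ) (I : Finset (Fin n → ℕ)) (a : (Fin n → ℕ) → ℝ) (x : Fin n → ℝ) :
    Set (Fin n → ℝ) :=
  convexHull ℝ ((fun (i : Fin n → ℕ) (j : Fin n) => (i j : ℝ)) ''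
    ((I.filter fun i => ∀ l ∈ I, tvalN n a l x ≤ tvalN n a i x) : Set (Fin n → ℕ)))

/-- The (closed) cell of the polyhedral decomposition of `ℝⁿ` induced by `(I, a)` dual to a
cell `Λ` of `Subdiv(Δ)`: `V^Λ = {x | cellAt x = Λ}`. -/
def dualSupport (n : ℕ) (I : Finset (Fin n → ℕ)) (a : (Fin n → ℕ) → ℝ)
    (Λ : Set (Fin n → ℝ)) : Set (Fin n → ℝ) :=
  {x | cellAt n I a x = Λ}

/-- The dimension of a subset of `ℝⁿ` (the dimension of its affine span). -/
def dimA {n : ℕ} (s : Set (Fin n → ℝ)) : ℕ := Module.finrank ℝ (vectorSpan ℝ s)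

namespace TropAux

variable {n : ℕ}

def iota (i : Fin n → ℕ) : Fin n → ℝ := fun j => (i j : ℝ)

lemma iota_injective : Function.Injective (iota (n := n)) := by
  intro i j h
  funext k
  have := congrFun h k
  simpa [iota] using this

def dot (u v : Fin n → ℝ) : ℝ := ∑ j, u j * v j

lemma dot_comm (u v : Fin n → ℝ) : dot u v = dot v u := by
  simp [dot, mul_comm]

lemma dot_sub_left (u v w : Fin n → ℝ) : dot (u - v) w = dot u w - dot v w := by
  simp [dot, sub_mul, Finset.sum_sub_distrib]

lemma dot_add_right (u v w : Fin n → ℝ) : dot u (v + w) = dot u v + dot u w := by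
  simp [dot, mul_add, Finset.sum_add_distrib]

lemma dot_smul_right (u : Fin n → ℝ) (c : ℝ) (v : Fin n → ℝ) :
    dot u (c • v) = c * dot u v := by
  simp only [dot, Pi.smul_apply, smul_eq_mul, Finset.mul_sum]
  exact Finset.sum_congr rfl fun _ _ => by ring

lemma dot_smul_left (c : ℝ) (u v : Fin n → ℝ) : dot (c • u) v = c * dot u v := by
  simp only [dot, Pi.smul_apply, smul_eq_mul, Finset.mul_sum]
  exact Finset.sum_congr rfl fun _ _ => by ring

lemma dot_sum_left {β : Type*} (s : Finset β) (c : β → ℝ) (v : β → Fin n → ℝ)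
    (w : Fin n → ℝ) : dot (∑ i ∈ s, c i • v i) w = ∑ i ∈ s, c i * dot (v i) w := by
  simp only [dot, Finset.sum_apply, Pi.smul_apply, smul_eq_mul, Finset.sum_mul, Finset.mul_sum]
  rw [Finset.sum_comm]
  apply Finset.sum_congr rfl; intros; apply Finset.sum_congr rfl; intros; ring

lemma dot_self_pos {u : Fin n → ℝ} (hu : u ≠ 0) : 0 < dot u u := by
  obtain ⟨j, hj⟩ := Function.ne_iff.mp hu
  refine Finset.sum_pos' (fun k _ => mul_self_nonneg _) ⟨j, Finset.mem_univ j, ?_⟩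
  exact mul_self_pos.mpr hj

variable (I : Finset (Fin n → ℕ)) (a : (Fin n → ℕ) → ℝ)

def Smax (x : Fin n → ℝ) : Finset (Fin n → ℕ) :=
  I.filter fun i => ∀ l ∈ I, tvalN n a l x ≤ tvalN n a i x

lemma mem_Smax {x : Fin n → ℝ} {i : Fin n → ℕ} :
    i ∈ Smax I a x ↔ i ∈ I ∧ ∀ l ∈ I, tvalN n a l x ≤ tvalN n a i x :=
  Finset.mem_filter

lemma Smax_subset (x : Fin n → ℝ) : Smax I a x ⊆ I := Finset.filter_subset _ _

lemma Smax_nonempty (hI : I.Nonempty) (x : Fin n → ℝ) : (Smax I a x).Nonempty := by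
  obtain ⟨b, hb, hbm⟩ := I.exists_max_image (fun i => tvalN n a i x) hI
  exact ⟨b, (mem_Smax I a).mpr ⟨hb, hbm⟩⟩

lemma cellAt_eq (x : Fin n → ℝ) :
    cellAt n I a x = convexHull ℝ (iota '' (Smax I a x : Set (Fin n → ℕ))) := rfl

lemma tval_eq_dot (i : Fin n → ℕ) (x : Fin n → ℝ) :
    tvalN n a i x = a i + dot (iota i) x := rfl

lemma exists_weights {x : Fin n → ℝ} {p : Fin n → ℝ} (hp : p ∈ cellAt n I a x) :
    ∃ w : (Fin n → ℕ) → ℝ, (∀ i ∈ Smax I a x, 0 ≤ w i) ∧ (∑ i ∈ Smax I a x, w i) = 1 ∧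
      (∑ i ∈ Smax I a x, w i • iota i) = p := by
  have himg : iota '' (Smax I a x : Set (Fin n → ℕ)) =
      (((Smax I a x).image iota : Finset (Fin n → ℝ)) : Set (Fin n → ℝ)) := by
    simp [Finset.coe_image]
  rw [cellAt_eq, himg, Finset.convexHull_eq] at hp
  obtain ⟨w, hw0, hw1, hwc⟩ := hp
  have hinj : Set.InjOn iota (Smax I a x : Set (Fin n → ℕ)) := iota_injective.injOn
  refine ⟨fun i => w (iota i), ?_, ?_, ?_⟩
  · exact fun i hi => hw0 _ (Finset.mem_image_of_mem _ hi)
  · rw [← Finset.sum_image (fun i hi j hj h => hinj hi hj h)]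
    exact hw1
  · have := Finset.centerMass_eq_of_sum_1 _ id hw1
    rw [this] at hwc
    have hs := Finset.sum_image (s := Smax I a x) (g := iota)
      (f := fun y : Fin n → ℝ => w y • id y) (fun i hi j hj h => hinj hi hj h)
    rw [← hwc]
    exact hs.symm

/-- Key lemma: if `i` is a maximizer at `y` and `ι i` lies in the cell of `x`,
then `i` is a maximizer at `x`. -/
lemma mem_Smax_of_mem_cell {x y : Fin n → ℝ} {i : Fin n → ℕ}
    (hiy : i ∈ Smax I a y) (hix : iota i ∈ cellAt n I a x) : i ∈ Smax I a x := by
  obtain ⟨w, hw0, hw1, hwp⟩ := exists_weights I a hix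
  have hiI : i ∈ I := (mem_Smax I a).mp hiy |>.1
  have hmaxy := (mem_Smax I a).mp hiy |>.2
  -- ∑ w_s * a s ≤ a i
  have hdot : dot (∑ s ∈ Smax I a x, w s • iota s) y = dot (iota i) y := by rw [hwp]
  have hsum_le : (∑ s ∈ Smax I a x, w s * a s) ≤ a i := by
    have h1 : (∑ s ∈ Smax I a x, w s * tvalN n a s y) ≤ tvalN n a i y := by
      calc (∑ s ∈ Smax I a x, w s * tvalN n a s y)
          ≤ ∑ s ∈ Smax I a x, w s * tvalN n a i y := by
            refine Finset.sum_le_sum fun s hs => ?_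
            exact mul_le_mul_of_nonneg_left (hmaxy s (Smax_subset I a x hs)) (hw0 s hs)
        _ = tvalN n a i y := by rw [← Finset.sum_mul, hw1, one_mul]
    have h2 : (∑ s ∈ Smax I a x, w s * tvalN n a s y)
        = (∑ s ∈ Smax I a x, w s * a s) + dot (iota i) y := by
      rw [← hdot, dot_sum_left]
      simp only [tval_eq_dot, mul_add, Finset.sum_add_distrib]
    rw [h2, tval_eq_dot] at h1
    linarith
  refine (mem_Smax I a).mpr ⟨hiI, fun l hl => ?_⟩
  have h3 : (∑ s ∈ Smax I a x, w s * tvalN n a s x) ≤ tvalN n a i x := by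
    have : (∑ s ∈ Smax I a x, w s * tvalN n a s x)
        = (∑ s ∈ Smax I a x, w s * a s) + dot (iota i) x := by
      have hdx : dot (∑ s ∈ Smax I a x, w s • iota s) x = dot (iota i) x := by rw [hwp]
      rw [← hdx, dot_sum_left]
      simp only [tval_eq_dot, mul_add, Finset.sum_add_distrib]
    rw [this, tval_eq_dot]
    linarith
  have h4 : tvalN n a l x ≤ ∑ s ∈ Smax I a x, w s * tvalN n a s x := by
    calc tvalN n a l x = ∑ s ∈ Smax I a x, w s * tvalN n a l x := by
          rw [← Finset.sum_mul, hw1, one_mul]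
      _ ≤ ∑ s ∈ Smax I a x, w s * tvalN n a s x := by
          refine Finset.sum_le_sum fun s hs => ?_
          exact mul_le_mul_of_nonneg_left (((mem_Smax I a).mp hs).2 l hl) (hw0 s hs)
  linarith

lemma Smax_subset_of_cell_subset {x y : Fin n → ℝ}
    (h : cellAt n I a y ⊆ cellAt n I a x) : Smax I a y ⊆ Smax I a x := by
  intro i hi
  refine mem_Smax_of_mem_cell I a hi (h ?_)
  exact subset_convexHull ℝ _ (Set.mem_image_of_mem _ hi)

lemma cellAt_congr {x y : Fin n → ℝ} (h : Smax I a x = Smax I a y) :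
    cellAt n I a x = cellAt n I a y := by rw [cellAt_eq, cellAt_eq, h]

lemma Smax_eq_of_cell_eq {x y : Fin n → ℝ} (h : cellAt n I a x = cellAt n I a y) :
    Smax I a x = Smax I a y :=
  le_antisymm (Smax_subset_of_cell_subset I a h.le) (Smax_subset_of_cell_subset I a h.ge)

lemma dualSupport_eq (x₀ : Fin n → ℝ) :
    dualSupport n I a (cellAt n I a x₀) = {x | Smax I a x = Smax I a x₀} := by
  ext x
  constructor
  · exact fun h => Smax_eq_of_cell_eq I a h
  · exact fun h => cellAt_congr I a h

lemma tval_add_smul (l : Fin n → ℕ) (x u : Fin n → ℝ) (t : ℝ) :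
    tvalN n a l (x + t • u) = tvalN n a l x + t * dot (iota l) u := by
  rw [tval_eq_dot, tval_eq_dot, dot_add_right, dot_smul_right]
  ring

/-- On the open segment from `x` towards `y`, the maximizer set is `Smax y`,
provided `Smax y ⊆ Smax x`. -/
lemma Smax_combo {x y : Fin n → ℝ} (hxy : Smax I a y ⊆ Smax I a x)
    (hy : (Smax I a y).Nonempty) {t : ℝ} (ht0 : 0 < t) (ht1 : t < 1) :
    Smax I a (x + t • (y - x)) = Smax I a y := by
  obtain ⟨i₁, hi₁⟩ := hy
  have hi₁x : i₁ ∈ Smax I a x := hxy hi₁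
  have hval : ∀ l : Fin n → ℕ, tvalN n a l (x + t • (y - x))
      = (1 - t) * tvalN n a l x + t * tvalN n a l y := by
    intro l
    rw [tval_add_smul]
    have : dot (iota l) (y - x) = (tvalN n a l y - a l) - (tvalN n a l x - a l) := by
      rw [show y - x = y + (-1 : ℝ) • x by funext j; simp; ring, dot_add_right, dot_smul_right,
        tval_eq_dot, tval_eq_dot]
      ring
    rw [this]; ring
  ext l
  simp only [mem_Smax]
  constructor
  · rintro ⟨hlI, hlm⟩
    have h1 := hlm i₁ (Smax_subset I a x hi₁x)
    rw [hval, hval] at h1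
    have hx1 := ((mem_Smax I a).mp hi₁x).2 l hlI
    have hy1 := ((mem_Smax I a).mp hi₁).2 l hlI
    have hly : tvalN n a l y = tvalN n a i₁ y := by nlinarith
    refine ⟨hlI, fun m hm => ?_⟩
    rw [hly]
    exact ((mem_Smax I a).mp hi₁).2 m hm
  · rintro hl'
    have hl : l ∈ Smax I a y := (mem_Smax I a).mpr hl'
    have hlx : l ∈ Smax I a x := hxy hl
    refine ⟨Smax_subset I a x hlx, fun m hm => ?_⟩
    rw [hval, hval]
    have := ((mem_Smax I a).mp hlx).2 m hm
    have := ((mem_Smax I a).mp hl).2 m hm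
    nlinarith

lemma dot_sub_right (u v w : Fin n → ℝ) : dot u (v - w) = dot u v - dot u w := by
  simp [dot, mul_sub, Finset.sum_sub_distrib]

lemma dot_add_left (u v w : Fin n → ℝ) : dot (u + v) w = dot u w + dot v w := by
  simp [dot, add_mul, Finset.sum_add_distrib]

lemma dot_zero_left (w : Fin n → ℝ) : dot 0 w = 0 := by simp [dot]

def Zspan (S₀ : Finset (Fin n → ℕ)) (i₀ : Fin n → ℕ) : Submodule ℝ (Fin n → ℝ) :=
  Submodule.span ℝ ((fun i => iota i - iota i₀) '' (S₀ : Set (Fin n → ℕ)))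

def Wsub (S₀ : Finset (Fin n → ℕ)) (i₀ : Fin n → ℕ) : Submodule ℝ (Fin n → ℝ) where
  carrier := {u | ∀ i ∈ S₀, dot (iota i - iota i₀) u = 0}
  add_mem' := by
    intro u v hu hv i hi
    rw [dot_add_right, hu i hi, hv i hi, add_zero]
  zero_mem' := by
    intro i hi
    simp [dot]
  smul_mem' := by
    intro c u hu i hi
    rw [dot_smul_right, hu i hi, mul_zero]

lemma mem_Wsub {S₀ : Finset (Fin n → ℕ)} {i₀ : Fin n → ℕ} {u : Fin n → ℝ} :
    u ∈ Wsub S₀ i₀ ↔ ∀ i ∈ S₀, dot (iota i - iota i₀) u = 0 := Iff.rfl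

lemma dot_eq_zero_of_mem {S₀ : Finset (Fin n → ℕ)} {i₀ : Fin n → ℕ} {u : Fin n → ℝ}
    (hu : u ∈ Wsub S₀ i₀) {z : Fin n → ℝ} (hz : z ∈ Zspan S₀ i₀) : dot z u = 0 := by
  induction hz using Submodule.span_induction with
  | mem z hzm =>
    obtain ⟨i, hi, rfl⟩ := hzm
    exact hu i hi
  | zero => exact dot_zero_left u
  | add y z _ _ hy hz => rw [dot_add_left, hy, hz, add_zero]
  | smul c y _ hy => rw [dot_smul_left, hy, mul_zero]

lemma vectorSpan_cell {x₀ : Fin n → ℝ} {i₀ : Fin n → ℕ} (hi₀ : i₀ ∈ Smax I a x₀) :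
    vectorSpan ℝ (cellAt n I a x₀) = Zspan (Smax I a x₀) i₀ := by
  have h1 : vectorSpan ℝ (cellAt n I a x₀)
      = vectorSpan ℝ (iota '' (Smax I a x₀ : Set (Fin n → ℕ))) := by
    rw [← direction_affineSpan, ← direction_affineSpan, cellAt_eq, affineSpan_convexHull]
  rw [h1, vectorSpan_eq_span_vsub_set_right ℝ
    (Set.mem_image_of_mem iota (Finset.mem_coe.mpr hi₀)), Zspan]
  congr 1
  rw [Set.image_image]
  rfl

/-- Membership description of `V^Λ` for `Λ = cellAt x₀`. -/
lemma mem_dual_iff {x₀ : Fin n → ℝ} {i₀ : Fin n → ℕ} (hi₀ : i₀ ∈ Smax I a x₀)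
    (x : Fin n → ℝ) :
    Smax I a x = Smax I a x₀ ↔
      ((∀ i ∈ Smax I a x₀, tvalN n a i x = tvalN n a i₀ x) ∧
        ∀ l ∈ I, l ∉ Smax I a x₀ → tvalN n a l x < tvalN n a i₀ x) := by
  have hi₀I : i₀ ∈ I := Smax_subset I a x₀ hi₀
  constructor
  · intro h
    have hi₀x : i₀ ∈ Smax I a x := h ▸ hi₀
    constructor
    · intro i hi
      have hix : i ∈ Smax I a x := h ▸ hi
      exact le_antisymm (((mem_Smax I a).mp hi₀x).2 i (Smax_subset I a x₀ hi))
        (((mem_Smax I a).mp hix).2 i₀ hi₀I)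
    · intro l hl hln
      rcases lt_or_eq_of_le (((mem_Smax I a).mp hi₀x).2 l hl) with h' | h'
      · exact h'
      · exfalso
        apply hln
        rw [← h]
        exact (mem_Smax I a).mpr ⟨hl, fun m hm => h' ▸ ((mem_Smax I a).mp hi₀x).2 m hm⟩
  · rintro ⟨heq, hlt⟩
    ext l
    simp only [mem_Smax]
    constructor
    · rintro ⟨hlI, hlm⟩
      by_contra hln
      have hln' : l ∉ Smax I a x₀ := fun hc => hln ((mem_Smax I a).mp hc)
      have hl1 := hlt l hlI hln'
      exact absurd (hlm i₀ hi₀I) (not_le.mpr hl1)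
    · intro hl'
      have hl : l ∈ Smax I a x₀ := (mem_Smax I a).mpr hl'
      refine ⟨Smax_subset I a x₀ hl, fun m hm => ?_⟩
      rw [heq l hl]
      by_cases hms : m ∈ Smax I a x₀
      · rw [heq m hms]
      · exact (hlt m hm hms).le

lemma exists_eps_pos {β : Type*} (s : Finset β) (g d : β → ℝ) (hg : ∀ b ∈ s, 0 < g b) :
    ∃ ε > (0:ℝ), ∀ b ∈ s, ε * d b < g b := by
  classical
  induction s using Finset.induction with
  | empty => exact ⟨1, one_pos, by simp⟩
  | @insert b s hb ih =>
    obtain ⟨ε', hε', h'⟩ := ih (fun c hc => hg c (Finset.mem_insert_of_mem hc))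
    have hgb : 0 < g b := hg b (Finset.mem_insert_self b s)
    set eb : ℝ := g b / (max (d b) 0 + 1) with heb
    have heb_pos : 0 < eb := by
      apply div_pos hgb
      have := le_max_right (d b) 0
      linarith
    refine ⟨min ε' eb, lt_min hε' heb_pos, fun c hc => ?_⟩
    rcases Finset.mem_insert.mp hc with rfl | hc'
    · rcases le_or_gt (d c) 0 with hd | hd
      · have : min ε' eb * d c ≤ 0 := mul_nonpos_of_nonneg_of_nonpos (le_of_lt (lt_min hε' heb_pos)) hd
        linarith
      · have h1 : min ε' eb ≤ eb := min_le_right _ _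
        have h2 : min ε' eb * d c ≤ eb * d c := mul_le_mul_of_nonneg_right h1 hd.le
        have h3 : eb * d c < g c := by
          rw [heb]
          rw [div_mul_eq_mul_div, div_lt_iff₀ (by positivity)]
          have hm : max (d c) 0 = d c := max_eq_left hd.le
          nlinarith
        linarith
    · rcases le_or_gt (d c) 0 with hd | hd
      · have : min ε' eb * d c ≤ 0 := mul_nonpos_of_nonneg_of_nonpos (le_of_lt (lt_min hε' heb_pos)) hd
        exact lt_of_le_of_lt this (hg c hc)
      · have h2 : min ε' eb * d c ≤ ε' * d c :=
          mul_le_mul_of_nonneg_right (min_le_left _ _) hd.le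
        exact lt_of_le_of_lt h2 (h' c hc')

lemma tval_lt_of_not_mem_Smax {x₀ : Fin n → ℝ} {i₀ l : Fin n → ℕ} (hi₀ : i₀ ∈ Smax I a x₀)
    (hl : l ∈ I) (hln : l ∉ Smax I a x₀) : tvalN n a l x₀ < tvalN n a i₀ x₀ := by
  rcases lt_or_eq_of_le (((mem_Smax I a).mp hi₀).2 l hl) with h | h
  · exact h
  · exact absurd ((mem_Smax I a).mpr ⟨hl, fun m hm => h ▸ ((mem_Smax I a).mp hi₀).2 m hm⟩) hln

lemma vectorSpan_dual {x₀ : Fin n → ℝ} {i₀ : Fin n → ℕ} (hi₀ : i₀ ∈ Smax I a x₀) :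
    vectorSpan ℝ (dualSupport n I a (cellAt n I a x₀)) = Wsub (Smax I a x₀) i₀ := by
  have hi₀I : i₀ ∈ I := Smax_subset I a x₀ hi₀
  have hx₀ : x₀ ∈ dualSupport n I a (cellAt n I a x₀) := rfl
  apply le_antisymm
  · rw [vectorSpan_def, Submodule.span_le]
    rintro v ⟨x, hx, y, hy, rfl⟩
    rw [dualSupport_eq] at hx hy
    intro i hi
    have key : ∀ z : Fin n → ℝ, Smax I a z = Smax I a x₀ →
        dot (iota i - iota i₀) z = a i₀ - a i := by
      intro z hz
      have hz' := ((mem_dual_iff I a hi₀ z).mp hz).1 i hi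
      have e1 : tvalN n a i z = a i + dot (iota i) z := tval_eq_dot a i z
      have e2 : tvalN n a i₀ z = a i₀ + dot (iota i₀) z := tval_eq_dot a i₀ z
      rw [dot_sub_left]
      linarith
    show dot (iota i - iota i₀) (x - y) = 0
    rw [dot_sub_right, key x hx, key y hy, sub_self]
  · intro u hu
    obtain ⟨ε, hε, hlt⟩ := exists_eps_pos I
      (fun l => if l ∈ Smax I a x₀ then 1 else tvalN n a i₀ x₀ - tvalN n a l x₀)
      (fun l => dot (iota l - iota i₀) u)
      (by
        intro l hl
        split_ifs with h
        · exact one_pos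
        · exact sub_pos.mpr (tval_lt_of_not_mem_Smax I a hi₀ hl h))
    have hx₁ : x₀ + ε • u ∈ dualSupport n I a (cellAt n I a x₀) := by
      rw [dualSupport_eq]
      show Smax I a (x₀ + ε • u) = Smax I a x₀
      apply (mem_dual_iff I a hi₀ _).mpr
      constructor
      · intro i hi
        rw [tval_add_smul, tval_add_smul]
        have h1 := ((mem_dual_iff I a hi₀ x₀).mp rfl).1 i hi
        have h2 : dot (iota i) u = dot (iota i₀) u := by
          have h3 := hu i hi
          rw [dot_sub_left] at h3
          linarith
        rw [h1, h2]
      · intro l hl hln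
        rw [tval_add_smul, tval_add_smul]
        have h3 := hlt l hl
        rw [if_neg hln, dot_sub_left] at h3
        ring_nf at h3 ⊢
        nlinarith
    have hmem : (x₀ + ε • u) -ᵥ x₀ ∈ vectorSpan ℝ (dualSupport n I a (cellAt n I a x₀)) :=
      vsub_mem_vectorSpan ℝ hx₁ hx₀
    have heq : (x₀ + ε • u) -ᵥ x₀ = ε • u := by
      show x₀ + ε • u - x₀ = ε • u
      abel
    rw [heq] at hmem
    have := Submodule.smul_mem _ ε⁻¹ hmem
    rwa [smul_smul, inv_mul_cancel₀ hε.ne', one_smul] at this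

def eE : (Fin n → ℝ) ≃ₗ[ℝ] EuclideanSpace ℝ (Fin n) := (WithLp.linearEquiv 2 ℝ (Fin n → ℝ)).symm

lemma inner_eq_dot (w v : EuclideanSpace ℝ (Fin n)) :
    (inner ℝ w v : ℝ) = dot (eE.symm w) (eE.symm v) := by
  simp only [PiLp.inner_apply, RCLike.inner_apply, starRingEnd_apply, star_trivial]
  rw [dot_comm]
  rfl

lemma map_Wsub_eq (S₀ : Finset (Fin n → ℕ)) (i₀ : Fin n → ℕ) :
    (Wsub S₀ i₀).map (eE.toLinearMap) = ((Zspan S₀ i₀).map (eE.toLinearMap))ᗮ := by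
  ext v
  rw [Submodule.mem_map_equiv, Submodule.mem_orthogonal]
  constructor
  · intro h w hw
    rw [Submodule.mem_map_equiv] at hw
    rw [inner_eq_dot]
    exact dot_eq_zero_of_mem h hw
  · intro h i hi
    have hz : (eE (iota i - iota i₀)) ∈ (Zspan S₀ i₀).map eE.toLinearMap := by
      refine Submodule.mem_map_of_mem ?_
      exact Submodule.subset_span ⟨i, hi, rfl⟩
    have h2 := h _ hz
    rw [inner_eq_dot, LinearEquiv.symm_apply_apply] at h2
    exact h2

lemma finrank_Z_add_W (S₀ : Finset (Fin n → ℕ)) (i₀ : Fin n → ℕ) :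
    Module.finrank ℝ (Zspan S₀ i₀) + Module.finrank ℝ (Wsub S₀ i₀) = n := by
  have h1 := (LinearEquiv.finrank_map_eq eE (Zspan S₀ i₀)).symm
  have h2 := (LinearEquiv.finrank_map_eq eE (Wsub S₀ i₀)).symm
  rw [h1, h2, map_Wsub_eq, Submodule.finrank_add_finrank_orthogonal,
    finrank_euclideanSpace_fin]

lemma cellAt_isClosed (x : Fin n → ℝ) : IsClosed (cellAt n I a x) := by
  rw [cellAt_eq]
  exact (Set.Finite.isCompact_convexHull ℝ
    ((Smax I a x).finite_toSet.image _)).isClosed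

lemma one_le_dim_of_ne {x : Fin n → ℝ} {i j : Fin n → ℕ} (hi : i ∈ Smax I a x)
    (hj : j ∈ Smax I a x) (hij : i ≠ j) : 1 ≤ dimA (cellAt n I a x) := by
  have hvne : iota i - iota j ≠ 0 := sub_ne_zero.mpr (fun h => hij (iota_injective h))
  have hmem : iota i - iota j ∈ vectorSpan ℝ (cellAt n I a x) := by
    have h1 : iota i ∈ cellAt n I a x :=
      subset_convexHull ℝ _ (Set.mem_image_of_mem _ hi)
    have h2 : iota j ∈ cellAt n I a x :=
      subset_convexHull ℝ _ (Set.mem_image_of_mem _ hj)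
    exact vsub_mem_vectorSpan ℝ h1 h2
  rw [dimA, Nat.one_le_iff_ne_zero]
  intro h0
  rw [Submodule.finrank_eq_zero] at h0
  rw [h0] at hmem
  exact hvne (Submodule.mem_bot ℝ |>.mp hmem)

lemma dim_zero_of_singleton {x : Fin n → ℝ} {i : Fin n → ℕ} (h : Smax I a x = {i}) :
    dimA (cellAt n I a x) = 0 := by
  rw [dimA, cellAt_eq, h]
  have : (iota '' (({i} : Finset (Fin n → ℕ)) : Set (Fin n → ℕ))) = {iota i} := by
    simp
  rw [this, convexHull_singleton, vectorSpan_singleton]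
  exact finrank_bot ℝ _

lemma exists_ne_of_one_le_dim (hI : I.Nonempty) {x : Fin n → ℝ}
    (h : 1 ≤ dimA (cellAt n I a x)) :
    ∃ i ∈ Smax I a x, ∃ j ∈ Smax I a x, i ≠ j := by
  by_contra hc
  push_neg at hc
  obtain ⟨i, hi⟩ := Smax_nonempty I a hI x
  have hsing : Smax I a x = {i} := by
    apply Finset.eq_singleton_iff_unique_mem.mpr
    exact ⟨hi, fun j hj => hc j hj i hi⟩
  rw [dim_zero_of_singleton I a hsing] at h
  omega

lemma mem_tropSet_iff {x : Fin n → ℝ} :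
    x ∈ tropSetN n I a ↔ ∃ i ∈ Smax I a x, ∃ j ∈ Smax I a x, i ≠ j := by
  constructor
  · rintro ⟨i, hiI, j, hjI, hij, heq, hmax⟩
    refine ⟨i, (mem_Smax I a).mpr ⟨hiI, hmax⟩, j, (mem_Smax I a).mpr ⟨hjI, fun l hl => ?_⟩, hij⟩
    rw [← heq]
    exact hmax l hl
  · rintro ⟨i, hi, j, hj, hij⟩
    obtain ⟨hiI, hmi⟩ := (mem_Smax I a).mp hi
    obtain ⟨hjI, hmj⟩ := (mem_Smax I a).mp hj
    exact ⟨i, hiI, j, hjI, hij, le_antisymm (hmj i hiI) (hmi j hjI), hmi⟩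

def Uset (i : Fin n → ℕ) : Set (Fin n → ℝ) :=
  {x | ∀ l ∈ I, l ≠ i → tvalN n a l x < tvalN n a i x}

lemma Smax_eq_singleton_iff {i : Fin n → ℕ} (hiI : i ∈ I) (x : Fin n → ℝ) :
    Smax I a x = {i} ↔ x ∈ Uset I a i := by
  constructor
  · intro h l hl hli
    have hiS : i ∈ Smax I a x := h ▸ Finset.mem_singleton_self i
    have hln : l ∉ Smax I a x := by
      rw [h]
      simpa using hli
    exact tval_lt_of_not_mem_Smax I a hiS hl hln
  · intro hx
    ext l
    simp only [Finset.mem_singleton, mem_Smax]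
    constructor
    · rintro ⟨hlI, hlm⟩
      by_contra hli
      exact absurd (hlm i hiI) (not_le.mpr (hx l hlI hli))
    · rintro rfl
      refine ⟨hiI, fun m hm => ?_⟩
      by_cases hmi : m = l
      · subst hmi; exact le_rfl
      · exact (hx m hm hmi).le

lemma continuous_tval (l : Fin n → ℕ) : Continuous (tvalN n a l) := by
  apply continuous_const.add
  exact continuous_finset_sum _ fun j _ => continuous_const.mul (continuous_apply j)

lemma Uset_open (i : Fin n → ℕ) : IsOpen (Uset I a i) := by
  have : Uset I a i = ⋂ l ∈ I.erase i, {x | tvalN n a l x < tvalN n a i x} := by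
    ext x
    simp only [Uset, Set.mem_setOf_eq, Set.mem_iInter, Finset.mem_erase]
    constructor
    · intro h l ⟨hli, hl⟩
      exact h l hl hli
    · intro h l hl hli
      exact h l ⟨hli, hl⟩
  rw [this]
  exact isOpen_biInter_finset fun l _ =>
    isOpen_lt (continuous_tval a l) (continuous_tval a i)

lemma Uset_convex (i : Fin n → ℕ) : Convex ℝ (Uset I a i) := by
  have : Uset I a i = ⋂ l ∈ I.erase i,
      {x | dot (iota l - iota i) x < a i - a l} := by
    ext x
    simp only [Uset, Set.mem_setOf_eq, Set.mem_iInter, Finset.mem_erase]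
    constructor
    · intro h l ⟨hli, hl⟩
      have := h l hl hli
      rw [tval_eq_dot, tval_eq_dot] at this
      rw [dot_sub_left]
      linarith
    · intro h l hl hli
      have := h l ⟨hli, hl⟩
      rw [dot_sub_left] at this
      rw [tval_eq_dot, tval_eq_dot]
      linarith
  rw [this]
  apply convex_iInter₂
  intro l _
  exact convex_halfSpace_lt ⟨fun x y => dot_add_right _ x y, fun c x => dot_smul_right _ c x⟩ _

lemma Uset_disjoint {i j : Fin n → ℕ} (hi : i ∈ I) (hj : j ∈ I) (hij : i ≠ j) :
    Uset I a i ∩ Uset I a j = ∅ := by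
  ext x
  simp only [Set.mem_inter_iff, Set.mem_empty_iff_false, iff_false, not_and]
  intro hxi hxj
  have h1 := hxi j hj (Ne.symm hij)
  have h2 := hxj i hi hij
  exact absurd (h1.trans h2) (lt_irrefl _)

lemma dot_eq_on_dual {x₀ : Fin n → ℝ} {i₀ i : Fin n → ℕ} (hi₀ : i₀ ∈ Smax I a x₀)
    (hi : i ∈ Smax I a x₀) {z : Fin n → ℝ} (hz : Smax I a z = Smax I a x₀) :
    dot (iota i - iota i₀) z = a i₀ - a i := by
  have hz' := ((mem_dual_iff I a hi₀ z).mp hz).1 i hi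
  have e1 : tvalN n a i z = a i + dot (iota i) z := tval_eq_dot a i z
  have e2 : tvalN n a i₀ z = a i₀ + dot (iota i₀) z := tval_eq_dot a i₀ z
  rw [dot_sub_left]
  linarith

lemma continuous_dot (c : Fin n → ℝ) : Continuous (dot c) :=
  continuous_finset_sum _ fun j _ => continuous_const.mul (continuous_apply j)

lemma Smax_ray {x₀ u : Fin n → ℝ} {i₀ : Fin n → ℕ} (hi₀ : i₀ ∈ Smax I a x₀)
    (heq : ∀ i ∈ Smax I a x₀, dot (iota i) u = dot (iota i₀) u)
    (hle : ∀ l ∈ I, dot (iota l) u ≤ dot (iota i₀) u)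
    {t : ℝ} (ht : 0 ≤ t) : Smax I a (x₀ + t • u) = Smax I a x₀ := by
  apply (mem_dual_iff I a hi₀ _).mpr
  constructor
  · intro i hi
    rw [tval_add_smul, tval_add_smul, heq i hi, ((mem_dual_iff I a hi₀ x₀).mp rfl).1 i hi]
  · intro l hl hln
    rw [tval_add_smul, tval_add_smul]
    have h1 := tval_lt_of_not_mem_Smax I a hi₀ hl hln
    have h2 := mul_le_mul_of_nonneg_left (hle l hl) ht
    linarith

lemma unbounded_of_good {x₀ u : Fin n → ℝ} {i₀ : Fin n → ℕ} (hi₀ : i₀ ∈ Smax I a x₀)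
    (hu : u ≠ 0)
    (heq : ∀ i ∈ Smax I a x₀, dot (iota i) u = dot (iota i₀) u)
    (hle : ∀ l ∈ I, dot (iota l) u ≤ dot (iota i₀) u) :
    ¬ Bornology.IsBounded (dualSupport n I a (cellAt n I a x₀)) := by
  intro hb
  obtain ⟨C, hC⟩ := isBounded_iff_forall_norm_le.mp hb
  have hx₀mem : x₀ ∈ dualSupport n I a (cellAt n I a x₀) := rfl
  have hC0 : ‖x₀‖ ≤ C := hC x₀ hx₀mem
  have hu0 : (0:ℝ) < ‖u‖ := norm_pos_iff.mpr hu
  set t : ℝ := (C + ‖x₀‖ + 1) / ‖u‖ with htdef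
  have ht : 0 ≤ t := by
    apply div_nonneg _ hu0.le
    have := norm_nonneg x₀
    linarith
  have hmem : x₀ + t • u ∈ dualSupport n I a (cellAt n I a x₀) := by
    rw [dualSupport_eq]
    exact Smax_ray I a hi₀ heq hle ht
  have h1 := hC _ hmem
  have h2 : ‖t • u‖ ≤ ‖x₀ + t • u‖ + ‖x₀‖ := by
    have h3 := norm_sub_le (x₀ + t • u) x₀
    have h4 : x₀ + t • u - x₀ = t • u := by abel
    rw [h4] at h3
    linarith
  rw [norm_smul, Real.norm_eq_abs, abs_of_nonneg ht, htdef,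
    div_mul_cancel₀ _ hu0.ne'] at h2
  have := norm_nonneg x₀
  linarith

lemma good_of_unbounded {x₀ : Fin n → ℝ} {i₀ : Fin n → ℕ} (hi₀ : i₀ ∈ Smax I a x₀)
    (h : ¬ Bornology.IsBounded (dualSupport n I a (cellAt n I a x₀))) :
    ∃ u : Fin n → ℝ, u ≠ 0 ∧ (∀ i ∈ Smax I a x₀, dot (iota i) u = dot (iota i₀) u) ∧
      ∀ l ∈ I, dot (iota l) u ≤ dot (iota i₀) u := by
  rw [isBounded_iff_forall_norm_le] at h
  push_neg at h
  have hch : ∀ k : ℕ, ∃ x, x ∈ dualSupport n I a (cellAt n I a x₀) ∧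
      (k : ℝ) + ‖x₀‖ + 1 < ‖x‖ := by
    intro k
    obtain ⟨x, hx1, hx2⟩ := h ((k : ℝ) + ‖x₀‖ + 1)
    exact ⟨x, hx1, hx2⟩
  choose xs hxs hns using hch
  have hSx : ∀ k, Smax I a (xs k) = Smax I a x₀ := by
    intro k
    have := hxs k
    rw [dualSupport_eq] at this
    exact this
  set r : ℕ → ℝ := fun k => ‖xs k - x₀‖ with hr
  have hrk : ∀ k : ℕ, (k : ℝ) + 1 ≤ r k := by
    intro k
    have h5 := norm_sub_norm_le (xs k) x₀
    have := hns k
    simp only [hr]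
    linarith
  have hrpos : ∀ k : ℕ, 0 < r k := by
    intro k
    have h1 : (0:ℝ) < (k:ℝ) + 1 := by positivity
    linarith [hrk k]
  set us : ℕ → Fin n → ℝ := fun k => (r k)⁻¹ • (xs k - x₀) with hus
  have husmem : ∀ k, us k ∈ Metric.sphere (0 : Fin n → ℝ) 1 := by
    intro k
    simp only [Metric.mem_sphere, dist_zero_right, hus, norm_smul, Real.norm_eq_abs,
      abs_of_nonneg (inv_nonneg.mpr (hrpos k).le)]
    exact inv_mul_cancel₀ (hrpos k).ne'
  obtain ⟨u, humem, φ, hφ, hconv⟩ :=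
    (isCompact_sphere (0 : Fin n → ℝ) 1).tendsto_subseq husmem
  have hune : u ≠ 0 := by
    intro h0
    rw [Metric.mem_sphere, h0, dist_self] at humem
    norm_num at humem
  have heqall : ∀ i ∈ Smax I a x₀, dot (iota i) u = dot (iota i₀) u := by
    intro i hi
    have hzero : ∀ k, dot (iota i - iota i₀) (us k) = 0 := by
      intro k
      simp only [hus]
      rw [dot_smul_right, dot_sub_right, dot_eq_on_dual I a hi₀ hi (hSx k),
        dot_eq_on_dual I a hi₀ hi (rfl : Smax I a x₀ = Smax I a x₀), sub_self, mul_zero]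
    have hlim : Filter.Tendsto (fun k => dot (iota i - iota i₀) (us (φ k)))
        Filter.atTop (nhds (dot (iota i - iota i₀) u)) :=
      ((continuous_dot (iota i - iota i₀)).tendsto u).comp hconv
    have hzl : Filter.Tendsto (fun k => dot (iota i - iota i₀) (us (φ k)))
        Filter.atTop (nhds 0) := by
      simp only [hzero]
      exact tendsto_const_nhds
    have := tendsto_nhds_unique hlim hzl
    rw [dot_sub_left] at this
    linarith
  refine ⟨u, hune, heqall, ?_⟩
  intro l hl
  by_cases hls : l ∈ Smax I a x₀
  · exact le_of_eq (heqall l hls)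
  · set c : Fin n → ℝ := iota l - iota i₀ with hc
    set M : ℝ := max (a i₀ - a l - dot c x₀) 0 with hM
    have hM0 : 0 ≤ M := le_max_right _ _
    have hbound : ∀ k, dot c (us k) ≤ M / ((k : ℝ) + 1) := by
      intro k
      have hlt : dot c (xs k) < a i₀ - a l := by
        have h6 := tval_lt_of_not_mem_Smax I a ((hSx k) ▸ hi₀ :
          i₀ ∈ Smax I a (xs k)) hl (fun hcon => hls ((hSx k) ▸ hcon))
        rw [tval_eq_dot, tval_eq_dot] at h6
        rw [hc, dot_sub_left]
        linarith
      have h7 : dot c (us k) = (r k)⁻¹ * (dot c (xs k) - dot c x₀) := by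
        simp only [hus]
        rw [dot_smul_right, dot_sub_right]
      have h8 : dot c (xs k) - dot c x₀ ≤ M := by
        have := le_max_left (a i₀ - a l - dot c x₀) 0
        linarith
      have h9 : (r k)⁻¹ * (dot c (xs k) - dot c x₀) ≤ (r k)⁻¹ * M :=
        mul_le_mul_of_nonneg_left h8 (inv_nonneg.mpr (hrpos k).le)
      have h10 : (r k)⁻¹ ≤ ((k : ℝ) + 1)⁻¹ := by
        apply inv_anti₀ (by positivity) (hrk k)
      have h11 : (r k)⁻¹ * M ≤ ((k : ℝ) + 1)⁻¹ * M :=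
        mul_le_mul_of_nonneg_right h10 hM0
      rw [h7]
      calc (r k)⁻¹ * (dot c (xs k) - dot c x₀) ≤ ((k : ℝ) + 1)⁻¹ * M := by linarith
        _ = M / ((k : ℝ) + 1) := by ring
    have hlim : Filter.Tendsto (fun k => dot c (us (φ k)))
        Filter.atTop (nhds (dot c u)) := ((continuous_dot c).tendsto u).comp hconv
    have hgl : Filter.Tendsto (fun k : ℕ => M / ((k : ℝ) + 1))
        Filter.atTop (nhds 0) := by
      have h12 : Filter.Tendsto (fun k : ℕ => 1 / ((k : ℝ) + 1))
          Filter.atTop (nhds 0) := tendsto_one_div_add_atTop_nhds_zero_nat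
      have h13 := h12.const_mul M
      simp only [mul_zero] at h13
      convert h13 using 2 with k
      ring
    have hle2 : dot c u ≤ 0 := by
      apply le_of_tendsto_of_tendsto' hlim hgl
      intro k
      calc dot c (us (φ k)) ≤ M / ((φ k : ℝ) + 1) := hbound (φ k)
        _ ≤ M / ((k : ℝ) + 1) := by
          apply div_le_div_of_nonneg_left ?_ (by positivity) ?_ |>.trans_eq rfl
          · exact hM0
          · have h14 : (k : ℝ) ≤ (φ k : ℝ) := by exact_mod_cast hφ.le_apply
            linarith
    rw [hc, dot_sub_left] at hle2
    linarith

lemma frontier_of_good {x₀ u : Fin n → ℝ} {i₀ : Fin n → ℕ} (hi₀ : i₀ ∈ Smax I a x₀)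
    (hu : u ≠ 0)
    (heq : ∀ i ∈ Smax I a x₀, dot (iota i) u = dot (iota i₀) u)
    (hle : ∀ l ∈ I, dot (iota l) u ≤ dot (iota i₀) u) :
    cellAt n I a x₀ ⊆ frontier (convexHull ℝ (iota '' (I : Set (Fin n → ℕ)))) := by
  intro z hz
  set Δ : Set (Fin n → ℝ) := convexHull ℝ (iota '' (I : Set (Fin n → ℕ))) with hΔ
  have hΔclosed : IsClosed Δ :=
    (Set.Finite.isCompact_convexHull ℝ (I.finite_toSet.image _)).isClosed
  have hzΔ : z ∈ Δ := by
    apply convexHull_mono (Set.image_mono (f := iota) _) hz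
    exact_mod_cast Finset.coe_subset.mpr (Smax_subset I a x₀)
  have hlin : IsLinearMap ℝ (fun p : Fin n → ℝ => dot p u) :=
    ⟨fun x y => dot_add_left x y u, fun c x => dot_smul_left c x u⟩
  have hplane : cellAt n I a x₀ ⊆ {p | dot p u = dot (iota i₀) u} := by
    rw [cellAt_eq]
    apply convexHull_min
    · rintro p ⟨i, hi, rfl⟩
      exact heq i hi
    · exact convex_hyperplane hlin _
  have hhalf : Δ ⊆ {p | dot p u ≤ dot (iota i₀) u} := by
    apply convexHull_min
    · rintro p ⟨l, hl, rfl⟩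
      exact hle l hl
    · exact convex_halfSpace_le hlin _
  rw [hΔclosed.frontier_eq]
  refine ⟨hzΔ, fun hint => ?_⟩
  obtain ⟨ε, hε, hball⟩ := Metric.isOpen_iff.mp isOpen_interior z hint
  have hu0 : (0:ℝ) < ‖u‖ := norm_pos_iff.mpr hu
  set δ : ℝ := ε / (2 * ‖u‖) with hδ
  have hδ0 : 0 < δ := by positivity
  have hmem : z + δ • u ∈ Δ := by
    apply interior_subset
    apply hball
    rw [Metric.mem_ball, dist_eq_norm]
    have : z + δ • u - z = δ • u := by abel
    rw [this, norm_smul, Real.norm_eq_abs, abs_of_nonneg hδ0.le, hδ]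
    rw [div_mul_eq_mul_div, mul_comm]
    rw [div_lt_iff₀ (by positivity)]
    nlinarith
  have h1 := hhalf hmem
  have h2 : dot (z + δ • u) u = dot z u + δ * dot u u := by
    rw [dot_add_left, dot_smul_left]
  have h3 : dot z u = dot (iota i₀) u := hplane hz
  have h4 : 0 < dot u u := dot_self_pos hu
  simp only [Set.mem_setOf_eq] at h1
  rw [h2, h3] at h1
  nlinarith

lemma good_of_frontier {x₀ : Fin n → ℝ} {i₀ : Fin n → ℕ} (hi₀ : i₀ ∈ Smax I a x₀)
    (h : cellAt n I a x₀ ⊆ frontier (convexHull ℝ (iota '' (I : Set (Fin n → ℕ))))) :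
    ∃ u : Fin n → ℝ, u ≠ 0 ∧ (∀ i ∈ Smax I a x₀, dot (iota i) u = dot (iota i₀) u) ∧
      ∀ l ∈ I, dot (iota l) u ≤ dot (iota i₀) u := by
  have hi₀I : i₀ ∈ I := Smax_subset I a x₀ hi₀
  set Δ : Set (Fin n → ℝ) := convexHull ℝ (iota '' (I : Set (Fin n → ℕ))) with hΔ
  have hcx : Convex ℝ Δ := convex_convexHull ℝ _
  have hΔclosed : IsClosed Δ :=
    (Set.Finite.isCompact_convexHull ℝ (I.finite_toSet.image _)).isClosed
  by_cases hint : (interior Δ).Nonempty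
  · -- interior nonempty: separate the centroid of S₀ from the interior
    obtain ⟨q, hq⟩ := hint
    set S₀ := Smax I a x₀ with hS₀
    set z₀ : Fin n → ℝ := S₀.centerMass (fun _ => (1:ℝ)) iota with hz₀
    have hS₀ne : S₀.Nonempty := ⟨i₀, hi₀⟩
    have hcard : (0:ℝ) < S₀.card := by
      exact_mod_cast Finset.card_pos.mpr hS₀ne
    have hz₀Λ : z₀ ∈ cellAt n I a x₀ := by
      rw [cellAt_eq]
      apply Finset.centerMass_mem_convexHull _ (fun i _ => zero_le_one)
        (by simpa using hcard) (fun i hi => Set.mem_image_of_mem _ hi)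
    have hz₀f := h hz₀Λ
    rw [hΔclosed.frontier_eq] at hz₀f
    obtain ⟨hz₀Δ, hz₀ni⟩ := hz₀f
    obtain ⟨f, hf⟩ := geometric_hahn_banach_open_point hcx.interior isOpen_interior hz₀ni
    have hfle : ∀ p ∈ Δ, f p ≤ f z₀ := by
      intro p hp
      have hseq : ∀ t : ℝ, 0 < t → t ≤ 1 → f (t • q + (1 - t) • p) < f z₀ := by
        intro t ht0 ht1
        apply hf
        exact hcx.combo_interior_closure_mem_interior hq (subset_closure hp) ht0
          (by linarith) (by ring)
      have hlim : Filter.Tendsto (fun t : ℝ => f (t • q + (1 - t) • p))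
          (nhdsWithin 0 (Set.Ioi 0)) (nhds (f p)) := by
        have hcont : Continuous fun t : ℝ => f (t • q + (1 - t) • p) := by
          apply f.continuous.comp
          apply Continuous.add
          · exact (continuous_id.smul continuous_const)
          · exact ((continuous_const.sub continuous_id).smul continuous_const)
        have h0 := hcont.tendsto 0
        simp only [zero_smul, sub_zero, one_smul, zero_add] at h0
        exact h0.mono_left nhdsWithin_le_nhds
      apply le_of_tendsto hlim
      filter_upwards [Ioc_mem_nhdsGT_of_mem (Set.mem_Ico.mpr ⟨le_refl (0:ℝ), zero_lt_one⟩)]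
      rintro t ⟨ht0, ht1⟩
      exact (hseq t ht0 ht1).le
    set u : Fin n → ℝ := fun j => f (fun k => if j = k then 1 else 0) with hudef
    have hfu : ∀ p : Fin n → ℝ, f p = dot p u := by
      intro p
      have h5 := LinearMap.pi_apply_eq_sum_univ
        (f : (Fin n → ℝ) →L[ℝ] ℝ).toLinearMap p
      simp only [ContinuousLinearMap.coe_coe] at h5
      rw [h5, dot]
      exact Finset.sum_congr rfl fun j _ => by rw [smul_eq_mul, hudef]
    have hz₀val : f z₀ = (S₀.card : ℝ)⁻¹ * ∑ i ∈ S₀, f (iota i) := by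
      rw [hz₀, Finset.centerMass, map_smul]
      simp only [smul_eq_mul, Finset.sum_const, nsmul_eq_mul, mul_one, one_smul]
      rw [map_sum]
    have hIle : ∀ l ∈ I, f (iota l) ≤ f z₀ := fun l hl =>
      hfle _ (subset_convexHull ℝ _ (Set.mem_image_of_mem _ hl))
    have hgen : ∀ i ∈ S₀, f (iota i) = f z₀ := by
      by_contra hcon
      push_neg at hcon
      obtain ⟨i₁, hi₁, hne⟩ := hcon
      have hstrict : f (iota i₁) < f z₀ :=
        lt_of_le_of_ne (hIle i₁ (Smax_subset I a x₀ hi₁)) hne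
      have hsum : ∑ i ∈ S₀, f (iota i) < ∑ _i ∈ S₀, f z₀ :=
        Finset.sum_lt_sum (fun i hi => hIle i (Smax_subset I a x₀ hi)) ⟨i₁, hi₁, hstrict⟩
      rw [Finset.sum_const, nsmul_eq_mul] at hsum
      have h6 : (S₀.card : ℝ) * f z₀ = ∑ i ∈ S₀, f (iota i) := by
        rw [hz₀val, ← mul_assoc, mul_inv_cancel₀ hcard.ne', one_mul]
      rw [h6] at hsum
      exact absurd hsum (lt_irrefl _)
    refine ⟨u, ?_, ?_, ?_⟩
    · intro h0
      have hq' := hf q hq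
      rw [hfu, hfu, h0] at hq'
      simp only [dot, Pi.zero_apply, mul_zero, Finset.sum_const_zero] at hq'
      exact absurd hq' (lt_irrefl _)
    · intro i hi
      rw [← hfu, ← hfu, hgen i hi, hgen i₀ hi₀]
    · intro l hl
      rw [← hfu, ← hfu, hgen i₀ hi₀]
      exact hIle l hl
  · -- interior empty: Δ lies in a proper affine subspace
    have hAS : affineSpan ℝ (iota '' (I : Set (Fin n → ℕ))) ≠ ⊤ := by
      intro htop
      apply hint
      rw [hcx.interior_nonempty_iff_affineSpan_eq_top, hΔ, affineSpan_convexHull]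
      exact htop
    have hVS : vectorSpan ℝ (iota '' (I : Set (Fin n → ℕ))) ≠ ⊤ := by
      intro htop
      exact hAS ((AffineSubspace.affineSpan_eq_top_iff_vectorSpan_eq_top_of_nonempty ℝ _ _
        ⟨iota i₀, Set.mem_image_of_mem _ hi₀I⟩).mpr htop)
    set K : Submodule ℝ (EuclideanSpace ℝ (Fin n)) :=
      (vectorSpan ℝ (iota '' (I : Set (Fin n → ℕ)))).map eE.toLinearMap with hK
    have hKne : K ≠ ⊤ := by
      intro htop
      apply hVS
      rw [Submodule.eq_top_iff']
      intro z
      have hz : eE z ∈ K := htop ▸ Submodule.mem_top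
      obtain ⟨z', hz', hzz⟩ := hz
      have : z' = z := eE.injective hzz
      exact this ▸ hz'
    have hKorth : Kᗮ ≠ ⊥ := by
      intro hb
      apply hKne
      have hcc := congrArg Submodule.orthogonal hb
      rwa [K.orthogonal_orthogonal, Submodule.bot_orthogonal_eq_top] at hcc
    obtain ⟨v, hvK, hv0⟩ := Submodule.exists_mem_ne_zero_of_ne_bot hKorth
    have hkey : ∀ l ∈ I, dot (iota l) (eE.symm v) = dot (iota i₀) (eE.symm v) := by
      intro l hl
      have hgen : iota l - iota i₀ ∈ vectorSpan ℝ (iota '' (I : Set (Fin n → ℕ))) :=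
        vsub_mem_vectorSpan ℝ
          (Set.mem_image_of_mem iota (Finset.mem_coe.mpr hl))
          (Set.mem_image_of_mem iota (Finset.mem_coe.mpr hi₀I))
      have hmemK : eE (iota l - iota i₀) ∈ K := Submodule.mem_map_of_mem hgen
      have hz := (Submodule.mem_orthogonal _ _).mp hvK _ hmemK
      rw [inner_eq_dot, LinearEquiv.symm_apply_apply, dot_sub_left] at hz
      linarith
    refine ⟨eE.symm v, ?_, fun i hi => hkey i (Smax_subset I a x₀ hi),
      fun l hl => le_of_eq (hkey l hl)⟩
    intro h0
    apply hv0
    have := congrArg eE h0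
    rwa [LinearEquiv.apply_symm_apply, map_zero] at this

lemma dual_eq_component (hI : I.Nonempty) {x₀ : Fin n → ℝ} {i₀ : Fin n → ℕ}
    (hsing : Smax I a x₀ = {i₀}) {x : Fin n → ℝ}
    (hx : x ∈ dualSupport n I a (cellAt n I a x₀)) :
    dualSupport n I a (cellAt n I a x₀)
      = connectedComponentIn (closure (tropSetN n I a))ᶜ x := by
  have hi₀I : i₀ ∈ I := Smax_subset I a x₀ (hsing ▸ Finset.mem_singleton_self i₀)
  have hdU : dualSupport n I a (cellAt n I a x₀) = Uset I a i₀ := by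
    rw [dualSupport_eq]
    ext y
    simp only [Set.mem_setOf_eq, hsing]
    exact Smax_eq_singleton_iff I a hi₀I y
  set T := tropSetN n I a with hT
  set F := (closure T)ᶜ with hF
  have hUT : ∀ i ∈ I, ∀ y ∈ Uset I a i, y ∉ T := by
    intro i hiI y hyU hyT
    obtain ⟨i', hi', j', hj', hne⟩ := (mem_tropSet_iff I a).mp hyT
    have hS : Smax I a y = {i} := (Smax_eq_singleton_iff I a hiI y).mpr hyU
    rw [hS, Finset.mem_singleton] at hi' hj'
    exact hne (hi'.trans hj'.symm)
  have hUF : ∀ i ∈ I, Uset I a i ⊆ F := by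
    intro i hiI y hy
    have hTsub : T ⊆ (Uset I a i)ᶜ := fun z hz hzU => hUT i hiI z hzU hz
    have hcl : closure T ⊆ (Uset I a i)ᶜ :=
      closure_minimal hTsub (Uset_open I a i).isClosed_compl
    exact fun hyc => hcl hyc hy
  have hxU : x ∈ Uset I a i₀ := hdU ▸ hx
  have hxF : x ∈ F := hUF i₀ hi₀I hxU
  rw [hdU]
  apply Set.Subset.antisymm
  · exact (Uset_convex I a i₀).isPreconnected.subset_connectedComponentIn hxU (hUF i₀ hi₀I)
  · set B := ⋃ i ∈ I.erase i₀, Uset I a i with hB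
    have hBopen : IsOpen B := isOpen_biUnion fun i _ => Uset_open I a i
    have hdisj : Disjoint (Uset I a i₀) B := by
      rw [Set.disjoint_left]
      intro y hy hyB
      obtain ⟨i, hiB, hyU⟩ := Set.mem_iUnion₂.mp hyB
      obtain ⟨hii, hiI⟩ := Finset.mem_erase.mp hiB
      have := Uset_disjoint I a hi₀I hiI (Ne.symm hii)
      exact Set.eq_empty_iff_forall_notMem.mp this y ⟨hy, hyU⟩
    have hsub : connectedComponentIn F x ⊆ Uset I a i₀ ∪ B := by
      intro y hy
      have hyF : y ∈ F := connectedComponentIn_subset F x hy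
      have hyT : y ∉ T := fun h => hyF (subset_closure h)
      obtain ⟨i, hiS⟩ : ∃ i, Smax I a y = {i} := by
        obtain ⟨i, hi⟩ := Smax_nonempty I a hI y
        refine ⟨i, Finset.eq_singleton_iff_unique_mem.mpr ⟨hi, fun j hj => ?_⟩⟩
        by_contra hne
        exact hyT ((mem_tropSet_iff I a).mpr ⟨j, hj, i, hi, hne⟩)
      have hiI : i ∈ I := Smax_subset I a y (hiS ▸ Finset.mem_singleton_self i)
      have hyU : y ∈ Uset I a i := (Smax_eq_singleton_iff I a hiI y).mp hiS
      by_cases hii : i = i₀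
      · exact Or.inl (hii ▸ hyU)
      · exact Or.inr (Set.mem_biUnion (Finset.mem_erase.mpr ⟨hii, hiI⟩) hyU)
    exact isPreconnected_connectedComponentIn.subset_left_of_subset_union
      (Uset_open I a i₀) hBopen hdisj hsub ⟨x, mem_connectedComponentIn hxF, hxU⟩

lemma mem_closure_dual (hI : I.Nonempty) {x y : Fin n → ℝ}
    (hxy : Smax I a y ⊆ Smax I a x) :
    x ∈ closure (dualSupport n I a (cellAt n I a y)) := by
  set f : ℕ → Fin n → ℝ := fun k => x + (((k : ℝ) + 2)⁻¹) • (y - x) with hf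
  have ht0 : ∀ k : ℕ, (0:ℝ) < ((k : ℝ) + 2)⁻¹ := fun k => by positivity
  have ht1 : ∀ k : ℕ, ((k : ℝ) + 2)⁻¹ < 1 := fun k => by
    rw [inv_lt_one_iff₀]
    right
    have : (0:ℝ) ≤ (k:ℝ) := Nat.cast_nonneg k
    linarith
  have hmem : ∀ k, f k ∈ dualSupport n I a (cellAt n I a y) := by
    intro k
    show cellAt n I a (f k) = cellAt n I a y
    apply cellAt_congr
    exact Smax_combo I a hxy (Smax_nonempty I a hI y) (ht0 k) (ht1 k)
  have htend : Filter.Tendsto f Filter.atTop (nhds x) := by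
    have h1 : Filter.Tendsto (fun k : ℕ => ((k : ℝ) + 2)⁻¹) Filter.atTop (nhds 0) := by
      apply Filter.Tendsto.inv_tendsto_atTop
      apply Filter.tendsto_atTop_add_const_right
      exact tendsto_natCast_atTop_atTop
    have h2 := h1.smul_const (y - x)
    rw [zero_smul] at h2
    have h3 := tendsto_const_nhds.add h2 (f := fun _ : ℕ => x)
    rw [add_zero] at h3
    exact h3
  exact mem_closure_of_tendsto htend (Filter.Eventually.of_forall hmem)

end TropAux

open TropAux

/-- **duality between `𝒯(f)` and `Subdiv(Δ)`.**
Let `f` be a tropical polynomial in `n` variables with support `I`, Newton polytope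
`Δ = conv(I)` and induced regular subdivision `Subdiv(Δ)` (whose cells are exactly the
convex hulls `cellAt x` of the sets of monomials attaining the maximum at the points
`x ∈ ℝⁿ`).  Then `Λ ↦ V^Λ = {x | cellAt x = Λ}` is a bijection from the cells of
`Subdiv(Δ)` onto the cells of `𝒯(f)` together with the connected components of
`ℝⁿ ∖ closure 𝒯(f)`, such that:
* a `k`-dimensional cell `Λ` corresponds to a cell `V^Λ` of dimension `n − k` whose affine
  span is orthogonal to that of `Λ`; for `k = 0`, `V^Λ` is a connected component of
  `ℝⁿ ∖ closure 𝒯(f)`;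
* `Λ₁ ≠ Λ₂` implies `V^{Λ₁} ∩ V^{Λ₂} = ∅`;
* `Λ₁ ⊆ closure Λ₂` implies `V^{Λ₂} ⊆ closure V^{Λ₁}`;
* `𝒯(f)` is the (disjoint) union of the `V^Λ` over the cells `Λ` of positive dimension;
* `V^Λ` is unbounded iff `Λ ⊆ ∂Δ`. -/
theorem tropical_dual_subdivision
    (n : ℕ) (I : Finset (Fin n → ℕ)) (hI : I.Nonempty) (a : (Fin n → ℕ) → ℝ) :
    -- the assignment Λ ↦ V^Λ is injective on the cells of Subdiv(Δ)
    (∀ Λ₁ Λ₂ : Set (Fin n → ℝ), (∃ x, cellAt n I a x = Λ₁) → (∃ x, cellAt n I a x = Λ₂) →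
        dualSupport n I a Λ₁ = dualSupport n I a Λ₂ → Λ₁ = Λ₂) ∧
    -- dimension complementarity and orthogonality
    (∀ Λ : Set (Fin n → ℝ), (∃ x, cellAt n I a x = Λ) →
        dimA Λ + dimA (dualSupport n I a Λ) = n ∧
        ∀ u ∈ vectorSpan ℝ (dualSupport n I a Λ), ∀ z ∈ vectorSpan ℝ Λ,
          (∑ j, u j * z j) = 0) ∧
    -- 0-dimensional cells correspond to the connected components of the complement
    (∀ Λ : Set (Fin n → ℝ), (∃ x, cellAt n I a x = Λ) → dimA Λ = 0 →
        ∀ x ∈ dualSupport n I a Λ,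
          dualSupport n I a Λ = connectedComponentIn (closure (tropSetN n I a))ᶜ x) ∧
    -- distinct cells have disjoint duals
    (∀ Λ₁ Λ₂ : Set (Fin n → ℝ), Λ₁ ≠ Λ₂ →
        dualSupport n I a Λ₁ ∩ dualSupport n I a Λ₂ = ∅) ∧
    -- inclusion of cells reverses into inclusion of closures of dual cells
    (∀ Λ₁ Λ₂ : Set (Fin n → ℝ), (∃ x, cellAt n I a x = Λ₁) → (∃ x, cellAt n I a x = Λ₂) →
        Λ₁ ⊆ closure Λ₂ → dualSupport n I a Λ₂ ⊆ closure (dualSupport n I a Λ₁)) ∧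
    -- 𝒯(f) is the disjoint union of the V^Λ over positive-dimensional Λ
    (tropSetN n I a =
      ⋃₀ {V | ∃ Λ : Set (Fin n → ℝ), (∃ x, cellAt n I a x = Λ) ∧ 1 ≤ dimA Λ ∧
        V = dualSupport n I a Λ}) ∧
    -- V^Λ is unbounded iff Λ lies in the boundary of the Newton polytope
    (∀ Λ : Set (Fin n → ℝ), (∃ x, cellAt n I a x = Λ) →
        (¬ Bornology.IsBounded (dualSupport n I a Λ) ↔
          Λ ⊆ frontier (convexHull ℝ
            ((fun (i : Fin n → ℕ) (j : Fin n) => (i j : ℝ)) '' (I : Set (Fin n → ℕ)))))) := by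
  refine ⟨?_, ?_, ?_, ?_, ?_, ?_, ?_⟩
  · -- injectivity
    rintro Λ₁ Λ₂ ⟨x₁, rfl⟩ _ hd
    have hx₁ : x₁ ∈ dualSupport n I a (cellAt n I a x₁) := rfl
    rw [hd] at hx₁
    exact hx₁
  · -- dimension and orthogonality
    rintro Λ ⟨x₀, rfl⟩
    obtain ⟨i₀, hi₀⟩ := Smax_nonempty I a hI x₀
    constructor
    · rw [dimA, dimA, vectorSpan_cell I a hi₀, vectorSpan_dual I a hi₀]
      exact finrank_Z_add_W _ _
    · intro u hu z hz
      rw [vectorSpan_dual I a hi₀] at hu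
      rw [vectorSpan_cell I a hi₀] at hz
      have h0 : dot z u = 0 := dot_eq_zero_of_mem hu hz
      rw [dot_comm] at h0
      exact h0
  · -- zero-dimensional cells and connected components
    rintro Λ ⟨x₀, rfl⟩ hdim x hx
    obtain ⟨i₀, hi₀⟩ := Smax_nonempty I a hI x₀
    have hsing : Smax I a x₀ = {i₀} := by
      apply Finset.eq_singleton_iff_unique_mem.mpr
      refine ⟨hi₀, fun j hj => ?_⟩
      by_contra hne
      have := one_le_dim_of_ne I a hj hi₀ hne
      omega
    exact dual_eq_component I a hI hsing hx
  · -- disjointness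
    intro Λ₁ Λ₂ hne
    ext x
    simp only [Set.mem_inter_iff, Set.mem_empty_iff_false, iff_false, not_and]
    intro h1 h2
    exact hne ((h1 : cellAt n I a x = Λ₁).symm.trans h2)
  · -- inclusion reversal
    rintro Λ₁ Λ₂ ⟨y, rfl⟩ ⟨x₂, rfl⟩ hsub x hx
    have hxc : cellAt n I a x = cellAt n I a x₂ := hx
    have hclosed : IsClosed (cellAt n I a x₂) := cellAt_isClosed I a x₂
    have hsub' : cellAt n I a y ⊆ cellAt n I a x := by
      rw [hxc]
      exact hsub.trans hclosed.closure_eq.subset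
    exact mem_closure_dual I a hI (Smax_subset_of_cell_subset I a hsub')
  · -- the tropical set is the union of positive-dimensional duals
    ext x
    constructor
    · intro hx
      obtain ⟨i, hi, j, hj, hij⟩ := (mem_tropSet_iff I a).mp hx
      exact ⟨dualSupport n I a (cellAt n I a x),
        ⟨cellAt n I a x, ⟨x, rfl⟩, one_le_dim_of_ne I a hi hj hij, rfl⟩, rfl⟩
    · rintro ⟨V, ⟨Λ, ⟨x₀, hx₀⟩, hdim, rfl⟩, hxV⟩
      have hxc : cellAt n I a x = Λ := hxV
      rw [← hxc] at hdim
      obtain ⟨i, hi, j, hj, hij⟩ := exists_ne_of_one_le_dim I a hI hdim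
      exact (mem_tropSet_iff I a).mpr ⟨i, hi, j, hj, hij⟩
  · -- unboundedness criterion
    rintro Λ ⟨x₀, rfl⟩
    obtain ⟨i₀, hi₀⟩ := Smax_nonempty I a hI x₀
    constructor
    · intro h
      obtain ⟨u, hu, heq, hle⟩ := good_of_unbounded I a hi₀ h
      exact frontier_of_good I a hi₀ hu heq hle
    · intro h
      obtain ⟨u, hu, heq, hle⟩ := good_of_frontier I a hi₀ h
      exact unbounded_of_good I a hi₀ hu heq hle
end
end

section
/- Let f, g be tropical polynomials in two variables with Newton polygons Δ_f, Δ_g and induced regular subdivisions Subdiv(Δ_f), Subdiv(Δ_g). Then the Newton polygon of "fg" is the Minkowski sum Δ_{fg} = Δ_f + Δ_g, and every cell of the regular subdivision of Δ_{fg} induced by "fg" is the Minkowski sum u + v of a cell u of Subdiv(Δ_f) and a cell v of Subdiv(Δ_g); namely, for a point q, the cell of Subdiv(Δ_{fg}) dual to the cell containing q is the Minkowski sum of the convex hulls of the sets of monomials of f and of g attaining the maximum at q. -/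
noncomputable section
open scoped Classical Pointwise
open MeasureTheory

/-- The value of the monomial of exponent `i` of the (max-plus) tropical polynomial with
coefficients `a` at the point `x ∈ ℝ²`. -/
def tval (a : ℕ × ℕ → ℝ) (i : ℕ × ℕ) (x : ℝ × ℝ) : ℝ :=
  a i + i.1 * x.1 + i.2 * x.2

/-- The tropical plane curve defined by the tropical polynomial with support `I` and
coefficients `a`: the set of points where the maximum `max_{i ∈ I} (a_i + i·x)` is attained
for at least two different indices. -/
def tropCurve (I : Finset (ℕ × ℕ)) (a : ℕ × ℕ → ℝ) : Set (ℝ × ℝ) :=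
  {x | ∃ i ∈ I, ∃ j ∈ I, i ≠ j ∧ tval a i x = tval a j x ∧ ∀ l ∈ I, tval a l x ≤ tval a i x}

/-- The set of monomials of the tropical polynomial `(I, a)` attaining the maximum at `x`. -/
def argmaxSet (I : Finset (ℕ × ℕ)) (a : ℕ × ℕ → ℝ) (x : ℝ × ℝ) : Finset (ℕ × ℕ) :=
  I.filter fun i => ∀ l ∈ I, tval a l x ≤ tval a i x

def toR2 (i : ℕ × ℕ) : ℝ × ℝ := ((i.1 : ℝ), (i.2 : ℝ))

/-- The cell of the regular subdivision of the Newton polygon dual to the cell of the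
tropical curve containing `x`: the convex hull of the monomials attaining the maximum at `x`. -/
def dualCell (I : Finset (ℕ × ℕ)) (a : ℕ × ℕ → ℝ) (x : ℝ × ℝ) : Set (ℝ × ℝ) :=
  convexHull ℝ (toR2 '' (argmaxSet I a x : Set (ℕ × ℕ)))

/-- The Newton polygon of a support set `I ⊆ ℤ²`. -/
def newtonPolygon (I : Finset (ℕ × ℕ)) : Set (ℝ × ℝ) :=
  convexHull ℝ (toR2 '' (I : Set (ℕ × ℕ)))

/-- Euclidean area of a subset of the plane. -/
def vol2 (S : Set (ℝ × ℝ)) : ℝ := (volume S).toReal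

/-- The mixed volume `ℳ(A,B) = vol(A+B) − vol(A) − vol(B)` of two (convex) sets in the
plane; `+` is the Minkowski sum. -/
def mixedVol (A B : Set (ℝ × ℝ)) : ℝ := vol2 (A + B) - vol2 A - vol2 B

/-- The tropical intersection multiplicity of a point `q` for the curves of `(If, af)` and
`(Ig, ag)`: the mixed volume of the two cells of the dual subdivisions corresponding to the
cells of the curves containing `q` (these dual cells are the Newton polygons of the residual
polynomials over `q`). -/
def tropMult (If : Finset (ℕ × ℕ)) (af : ℕ × ℕ → ℝ) (Ig : Finset (ℕ × ℕ)) (ag : ℕ × ℕ → ℝ)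
    (q : ℝ × ℝ) : ℝ :=
  mixedVol (dualCell If af q) (dualCell Ig ag q)

def translateSet (C : Set (ℝ × ℝ)) (u : ℝ × ℝ) : Set (ℝ × ℝ) := (· + u) '' C

/-- The stable intersection of two tropical plane curves: the limit set, as `u, w → 0`, of the
intersection points of small generic translates `C_f + u`, `C_g + w` whose intersection is
finite.  A point `q` is in the stable intersection iff arbitrarily close to it there are
intersection points of translates by arbitrarily small vectors with finite intersection. -/
def stableInter (Cf Cg : Set (ℝ × ℝ)) : Set (ℝ × ℝ) :=
  {q | ∀ ε > 0, ∃ u w : ℝ × ℝ, ‖u‖ < ε ∧ ‖w‖ < ε ∧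
    (translateSet Cf u ∩ translateSet Cg w).Finite ∧
    ∃ p ∈ translateSet Cf u ∩ translateSet Cg w, dist p q < ε}

/-- The coefficient of the monomial `k` in the tropical product `"fg"` of the tropical
polynomials `(If, af)` and `(Ig, ag)`: the maximum of `a_i + b_j` over the decompositions
`k = i + j`.  (The support of the product is the Minkowski sum `If + Ig`.) -/
def prodCoeff (If Ig : Finset (ℕ × ℕ)) (af ag : ℕ × ℕ → ℝ) (k : ℕ × ℕ) : ℝ :=
  if h : ((If ×ˢ Ig).filter fun p => p.1 + p.2 = k).Nonempty then
    ((If ×ˢ Ig).filter fun p => p.1 + p.2 = k).sup' h fun p => af p.1 + ag p.2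
  else 0


lemma toR2_add (i j : ℕ × ℕ) : toR2 (i + j) = toR2 i + toR2 j := by
  simp [toR2, Prod.ext_iff]

lemma toR2_image_add (A B : Set (ℕ × ℕ)) :
    toR2 '' (A + B) = toR2 '' A + toR2 '' B := by
  ext z
  constructor
  · rintro ⟨k, ⟨i, hi, j, hj, rfl⟩, rfl⟩
    exact ⟨toR2 i, ⟨i, hi, rfl⟩, toR2 j, ⟨j, hj, rfl⟩, (toR2_add i j).symm⟩
  · rintro ⟨_, ⟨i, hi, rfl⟩, _, ⟨j, hj, rfl⟩, rfl⟩
    exact ⟨i + j, ⟨i, hi, j, hj, rfl⟩, toR2_add i j⟩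

lemma tval_add_decomp (af ag : ℕ × ℕ → ℝ) (i j : ℕ × ℕ) (x : ℝ × ℝ) (c : ℕ × ℕ → ℝ)
    (hc : c (i + j) = af i + ag j) :
    tval c (i + j) x = tval af i x + tval ag j x := by
  simp only [tval, hc, Prod.fst_add, Prod.snd_add]
  push_cast
  ring

/-- Claim A: each decomposition gives a lower bound for the product value. -/
lemma le_tval_prod (If Ig : Finset (ℕ × ℕ)) (af ag : ℕ × ℕ → ℝ)
    {i j : ℕ × ℕ} (hi : i ∈ If) (hj : j ∈ Ig) (x : ℝ × ℝ) :
    tval af i x + tval ag j x ≤ tval (prodCoeff If Ig af ag) (i + j) x := by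
  have hmem : (i, j) ∈ (If ×ˢ Ig).filter fun p => p.1 + p.2 = i + j := by
    simp [Finset.mem_filter, hi, hj]
  have hne : ((If ×ˢ Ig).filter fun p => p.1 + p.2 = i + j).Nonempty := ⟨_, hmem⟩
  have hle : af i + ag j ≤ prodCoeff If Ig af ag (i + j) := by
    rw [prodCoeff, dif_pos hne]
    exact Finset.le_sup' (fun p => af p.1 + ag p.2) hmem
  simp only [tval, Prod.fst_add, Prod.snd_add] at *
  push_cast
  nlinarith [hle]

/-- Claim B: the product value is attained by some decomposition. -/
lemma tval_prod_attained (If Ig : Finset (ℕ × ℕ)) (af ag : ℕ × ℕ → ℝ)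
    {k : ℕ × ℕ} (hk : k ∈ If + Ig) (x : ℝ × ℝ) :
    ∃ i ∈ If, ∃ j ∈ Ig, i + j = k ∧
      tval (prodCoeff If Ig af ag) k x = tval af i x + tval ag j x := by
  obtain ⟨i0, hi0, j0, hj0, hij0⟩ := Finset.mem_add.1 hk
  have hne : ((If ×ˢ Ig).filter fun p => p.1 + p.2 = k).Nonempty :=
    ⟨(i0, j0), by simp [Finset.mem_filter, hi0, hj0, hij0]⟩
  obtain ⟨p, hp, hsup⟩ := Finset.exists_mem_eq_sup' hne fun p => af p.1 + ag p.2
  simp only [Finset.mem_filter, Finset.mem_product] at hp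
  refine ⟨p.1, hp.1.1, p.2, hp.1.2, hp.2, ?_⟩
  have hc : prodCoeff If Ig af ag k = af p.1 + ag p.2 := by
    rw [prodCoeff, dif_pos hne]; exact hsup
  rw [← hp.2] at hc ⊢
  exact tval_add_decomp af ag p.1 p.2 x _ hc

lemma argmax_prod (If Ig : Finset (ℕ × ℕ)) (hIf : If.Nonempty) (hIg : Ig.Nonempty)
    (af ag : ℕ × ℕ → ℝ) (x : ℝ × ℝ) :
    argmaxSet (If + Ig) (prodCoeff If Ig af ag) x =
      argmaxSet If af x + argmaxSet Ig ag x := by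
  obtain ⟨i0, hi0, hi0max⟩ := If.exists_max_image (fun i => tval af i x) hIf
  obtain ⟨j0, hj0, hj0max⟩ := Ig.exists_max_image (fun j => tval ag j x) hIg
  ext k
  constructor
  · intro hk'
    obtain ⟨hk, hmax⟩ := Finset.mem_filter.1 hk'
    obtain ⟨i, hi, j, hj, hij, heq⟩ := tval_prod_attained If Ig af ag hk x
    have h1 : tval (prodCoeff If Ig af ag) (i0 + j0) x ≤ tval (prodCoeff If Ig af ag) k x :=
      hmax _ (Finset.mem_add.2 ⟨i0, hi0, j0, hj0, rfl⟩)
    have h2 := le_tval_prod If Ig af ag hi0 hj0 x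
    have h3 : tval af i x ≤ tval af i0 x := hi0max i hi
    have h4 : tval ag j x ≤ tval ag j0 x := hj0max j hj
    have h5 : tval af i x = tval af i0 x ∧ tval ag j x = tval ag j0 x := by
      constructor <;> linarith
    exact Finset.mem_add.2 ⟨i, Finset.mem_filter.2 ⟨hi, fun l hl => h5.1 ▸ hi0max l hl⟩,
      j, Finset.mem_filter.2 ⟨hj, fun l hl => h5.2 ▸ hj0max l hl⟩, hij⟩
  · intro hk'
    obtain ⟨i, hi', j, hj', rfl⟩ := Finset.mem_add.1 hk'
    obtain ⟨hi, himax⟩ := Finset.mem_filter.1 hi'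
    obtain ⟨hj, hjmax⟩ := Finset.mem_filter.1 hj'
    refine Finset.mem_filter.2 ⟨Finset.mem_add.2 ⟨i, hi, j, hj, rfl⟩, fun l hl => ?_⟩
    obtain ⟨i2, hi2, j2, hj2, hij2, heq2⟩ := tval_prod_attained If Ig af ag hl x
    have := le_tval_prod If Ig af ag hi hj x
    have := himax i2 hi2
    have := hjmax j2 hj2
    linarith [heq2.ge]

/-- The Newton polygon of the tropical product `"fg"` is the Minkowski sum
of the Newton polygons of `f` and of `g`, and the regular subdivision of `Δ_{fg}` induced by
`"fg"` is the mixed subdivision: for every point `q`, the cell of `Subdiv(Δ_{fg})` dual to the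
cell containing `q` (the convex hull of the monomials of `"fg"` attaining the maximum at `q`)
is the Minkowski sum of the corresponding dual cells of `Subdiv(Δ_f)` and `Subdiv(Δ_g)`
(the convex hulls of the monomials of `f`, resp. `g`, attaining the maximum at `q`). -/
theorem newton_and_subdivision_of_product
    (If Ig : Finset (ℕ × ℕ)) (hIf : If.Nonempty) (hIg : Ig.Nonempty)
    (af ag : ℕ × ℕ → ℝ) :
    newtonPolygon (If + Ig) = newtonPolygon If + newtonPolygon Ig ∧
    ∀ q : ℝ × ℝ,
      dualCell (If + Ig) (prodCoeff If Ig af ag) q = dualCell If af q + dualCell Ig ag q := by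
  constructor
  · rw [newtonPolygon, Finset.coe_add, toR2_image_add, convexHull_add]
    rfl
  · intro q
    rw [dualCell, argmax_prod If Ig hIf hIg af ag q, Finset.coe_add, toR2_image_add,
      convexHull_add]
    rfl
end
end

section
/- Let P(a_i, b_j) be a polynomial over 𝕂 that is homogeneous in the set of variables (a_i)_{i∈I} and homogeneous in the set of variables (b_j)_{j∈J} (for instance the resultant R(I,J,𝕂)). Substitute each a_i by f̃_i = Σ_{k=o_i}^{n_i} A_{ik}t^{−ν_{ik}}y^k and each b_j by g̃_j = Σ_{q=r_j}^{m_j} B_{jq}t^{−η_{jq}}y^q, where the A_{ik}, B_{jq} are independent indeterminates. Then no cancellation of terms occurs: two distinct monomials T₁ ≠ T₂ of P give rise, after substitution and expansion, to disjoint sets of monomials in the variables A_{ik}, B_{jq}, y. Consequently, when the residue field has characteristic zero, the tropicalization of P(f̃_i, g̃_j) equals the evaluation of the tropicalization of P at the tropicalizations of the f̃_i, g̃_j. -/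
noncomputable section
open scoped Classical

/-- A nontrivial rank-one valuation `v : K → Γ ∪ {∞}` on a field `K` (written additively,
with `v 0 = ⊤` and value group containing `ℚ`).  The tropicalization map is `T(x) = −v(x)`. -/
structure Val (K : Type) [Field K] : Type where
  /-- the valuation -/
  v : K → WithTop ℝ
  v_eq_top : ∀ x : K, v x = ⊤ ↔ x = 0
  v_mul : ∀ x y : K, v (x * y) = v x + v y
  v_add : ∀ x y : K, min (v x) (v y) ≤ v (x + y)
  /-- the value group contains `ℚ` (in particular the valuation is nontrivial) -/
  v_rat : ∀ q : ℚ, ∃ x : K, v x = ((q : ℝ) : WithTop ℝ)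

abbrev TR := Tropical (WithTop ℝ)

/-- Coefficientwise tropicalization of a multivariate polynomial over a valued field. -/
def tropMv {K : Type} [Field K] {σ : Type} (v : K → WithTop ℝ) (p : MvPolynomial σ K) :
    MvPolynomial σ TR :=
  ∑ m ∈ p.support, MvPolynomial.monomial m (Tropical.trop (v (p.coeff m)))

/-- The substitution `a_i ↦ f̃_i = Σ_{k ∈ SF i} A_{ik} t^{−ν_{ik}} y^k`,
`b_j ↦ g̃_j = Σ_{q ∈ SG j} B_{jq} t^{−η_{jq}} y^q`, where the `A_{ik}`, `B_{jq}` are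
independent indeterminates (the variables `Sum.inl (Sum.inl (i,k))`,
`Sum.inl (Sum.inr (j,q))` of the target ring), `y` is the variable `Sum.inr ()`, and
`tcF (i,k) = t^{−ν_{ik}}`, `tcG (j,q) = t^{−η_{jq}}` are the given scalars. -/
def subsAlg {K : Type} [Field K] (SF SG : ℕ → Finset ℕ) (tcF tcG : ℕ × ℕ → K) :
    (ℕ ⊕ ℕ) → MvPolynomial (((ℕ × ℕ) ⊕ (ℕ × ℕ)) ⊕ Unit) K :=
  Sum.elim
    (fun i => ∑ k ∈ SF i, MvPolynomial.C (tcF (i, k)) *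
      MvPolynomial.X (Sum.inl (Sum.inl (i, k))) * MvPolynomial.X (Sum.inr ()) ^ k)
    (fun j => ∑ q ∈ SG j, MvPolynomial.C (tcG (j, q)) *
      MvPolynomial.X (Sum.inl (Sum.inr (j, q))) * MvPolynomial.X (Sum.inr ()) ^ q)

namespace Stmt17

open MvPolynomial Tropical Finsupp

abbrev Vr := ((ℕ × ℕ) ⊕ (ℕ × ℕ)) ⊕ Unit

variable {K : Type} [Field K]


/-- weight function singling out the group of `A`/`B`-variables attached to `s0` -/
def ws (s0 : ℕ ⊕ ℕ) : Vr → ℕ :=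
  Sum.elim (Sum.elim (fun p => if (Sum.inl p.1 : ℕ ⊕ ℕ) = s0 then 1 else 0)
    (fun p => if (Sum.inr p.1 : ℕ ⊕ ℕ) = s0 then 1 else 0)) fun _ => 0

lemma weight_single (w : Vr → ℕ) (e : Vr) (n : ℕ) :
    Finsupp.weight w (Finsupp.single e n) = n * w e := by
  rw [Finsupp.weight_apply, Finsupp.sum_single_index] <;> simp

lemma IWH_pow {w : Vr → ℕ} {φ : MvPolynomial Vr K} {m : ℕ}
    (h : φ.IsWeightedHomogeneous w m) (n : ℕ) :
    (φ ^ n).IsWeightedHomogeneous w (n * m) := by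
  induction n with
  | zero => simpa using isWeightedHomogeneous_one ..
  | succ n ih =>
    have h2 := ih.mul h
    rw [← pow_succ] at h2
    have : (n + 1) * m = n * m + m := by ring
    rwa [this]

lemma term_eq (c : K) (a b : Vr) (k : ℕ) :
    MvPolynomial.C c * X a * X b ^ k
      = monomial (Finsupp.single a 1 + Finsupp.single b k) c := by
  rw [X_pow_eq_monomial, C_apply, X, monomial_mul, monomial_mul]
  simp

lemma subs_hom (SF SG : ℕ → Finset ℕ) (tcF tcG : ℕ × ℕ → K) (s0 s : ℕ ⊕ ℕ) :
    (subsAlg SF SG tcF tcG s).IsWeightedHomogeneous (ws s0)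
      (if s = s0 then 1 else 0) := by
  cases s with
  | inl i =>
    simp only [subsAlg, Sum.elim_inl]
    apply IsWeightedHomogeneous.sum
    intro k _
    rw [term_eq]
    apply isWeightedHomogeneous_monomial
    rw [map_add, weight_single, weight_single]
    simp [ws]
  | inr j =>
    simp only [subsAlg, Sum.elim_inr]
    apply IsWeightedHomogeneous.sum
    intro q _
    rw [term_eq]
    apply isWeightedHomogeneous_monomial
    rw [map_add, weight_single, weight_single]
    simp [ws]

lemma hom_aeval_monomial (SF SG : ℕ → Finset ℕ) (tcF tcG : ℕ × ℕ → K)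
    (m : (ℕ ⊕ ℕ) →₀ ℕ) (s0 : ℕ ⊕ ℕ) :
    (MvPolynomial.aeval (subsAlg SF SG tcF tcG)
      (monomial m (1 : K))).IsWeightedHomogeneous (ws s0) (m s0) := by
  rw [aeval_monomial, map_one, one_mul]
  have h := IsWeightedHomogeneous.prod m.support
    (fun s => subsAlg SF SG tcF tcG s ^ m s)
    (fun s => m s * (if s = s0 then 1 else 0))
    (fun s _ => IWH_pow (subs_hom SF SG tcF tcG s0 s) (m s))
  have hdeg : (∑ s ∈ m.support, m s * (if s = s0 then 1 else 0)) = m s0 := by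
    have e : ∀ s ∈ m.support, m s * (if s = s0 then 1 else 0)
        = if s = s0 then m s else 0 := by
      intro s _; rw [mul_ite, mul_one, mul_zero]
    rw [Finset.sum_congr rfl e, Finset.sum_ite_eq' m.support s0 (fun s => m s)]
    by_cases h0 : s0 ∈ m.support
    · rw [if_pos h0]
    · rw [if_neg h0, Finsupp.notMem_support_iff.mp h0]
  rw [hdeg] at h
  exact h

lemma part1 (SF SG : ℕ → Finset ℕ) (tcF tcG : ℕ × ℕ → K)
    {m₁ m₂ : (ℕ ⊕ ℕ) →₀ ℕ} (hne : m₁ ≠ m₂) :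
    Disjoint (MvPolynomial.aeval (subsAlg SF SG tcF tcG)
        (monomial m₁ (1 : K))).support
      (MvPolynomial.aeval (subsAlg SF SG tcF tcG)
        (monomial m₂ (1 : K))).support := by
  rw [Finset.disjoint_left]
  intro μ h1 h2
  apply hne
  ext s0
  have e1 := hom_aeval_monomial SF SG tcF tcG m₁ s0 (MvPolynomial.mem_support_iff.mp h1)
  have e2 := hom_aeval_monomial SF SG tcF tcG m₂ s0 (MvPolynomial.mem_support_iff.mp h2)
  rw [← e1, ← e2]

lemma v_zero (V : Val K) : V.v 0 = ⊤ := (V.v_eq_top 0).mpr rfl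

lemma v_one (V : Val K) : V.v 1 = 0 := by
  have h := V.v_mul 1 1
  rw [mul_one] at h
  have hne : V.v 1 ≠ ⊤ := fun ht => one_ne_zero ((V.v_eq_top 1).mp ht)
  obtain ⟨r, hr⟩ := WithTop.ne_top_iff_exists.mp hne
  rw [← hr] at h ⊢
  have : r = r + r := by exact_mod_cast h
  have : r = 0 := by linarith
  rw [this]; rfl

lemma coeff_tropMv (V : Val K) {σ : Type} (p : MvPolynomial σ K) (μ : σ →₀ ℕ) :
    (tropMv V.v p).coeff μ = trop (V.v (p.coeff μ)) := by
  unfold tropMv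
  rw [MvPolynomial.coeff_sum]
  simp only [coeff_monomial]
  rw [Finset.sum_ite_eq' p.support μ (fun m => trop (V.v (p.coeff m)))]
  by_cases h : μ ∈ p.support
  · rw [if_pos h]
  · rw [if_neg h, MvPolynomial.notMem_support_iff.mp h, v_zero, trop_top]

lemma tropMv_monomial (V : Val K) {σ : Type} (m : σ →₀ ℕ) (c : K) :
    tropMv V.v (monomial m c) = monomial m (trop (V.v c)) := by
  ext μ
  rw [coeff_tropMv, coeff_monomial, coeff_monomial]
  split_ifs with h
  · rfl
  · rw [v_zero, trop_top]

lemma tropMv_C (V : Val K) {σ : Type} (c : K) :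
    tropMv V.v (MvPolynomial.C (σ := σ) c) = MvPolynomial.C (trop (V.v c)) := by
  rw [C_apply, tropMv_monomial, C_apply]

lemma tropMv_zero (V : Val K) {σ : Type} :
    tropMv V.v (0 : MvPolynomial σ K) = 0 := by
  unfold tropMv; simp

lemma tropMv_one (V : Val K) {σ : Type} :
    tropMv V.v (1 : MvPolynomial σ K) = 1 := by
  have h1 : (1 : MvPolynomial σ K) = MvPolynomial.C 1 := (map_one _).symm
  rw [h1, tropMv_C, v_one]
  have : trop ((0 : ℝ) : WithTop ℝ) = (1 : TR) := rfl
  rw [show ((0:WithTop ℝ)) = ((0:ℝ) : WithTop ℝ) from rfl, this, map_one]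

lemma tropMv_add_disjoint (V : Val K) {σ : Type} {f g : MvPolynomial σ K}
    (h : Disjoint f.support g.support) :
    tropMv V.v (f + g) = tropMv V.v f + tropMv V.v g := by
  ext μ
  rw [MvPolynomial.coeff_add, coeff_tropMv, coeff_tropMv, coeff_tropMv, MvPolynomial.coeff_add]
  by_cases hf : μ ∈ f.support
  · have hg : g.coeff μ = 0 :=
      MvPolynomial.notMem_support_iff.mp (Finset.disjoint_left.mp h hf)
    rw [hg, add_zero, v_zero, trop_top, add_zero]
  · have hf' : f.coeff μ = 0 := MvPolynomial.notMem_support_iff.mp hf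
    rw [hf', zero_add, v_zero, trop_top, zero_add]

lemma tropMv_sum_disjoint (V : Val K) {σ ι : Type} (s : Finset ι)
    (F : ι → MvPolynomial σ K)
    (h : ∀ i ∈ s, ∀ j ∈ s, i ≠ j → Disjoint (F i).support (F j).support) :
    tropMv V.v (∑ i ∈ s, F i) = ∑ i ∈ s, tropMv V.v (F i) := by
  induction s using Finset.cons_induction with
  | empty => simpa using tropMv_zero V
  | cons a s ha ih =>
    rw [Finset.sum_cons, Finset.sum_cons,
      tropMv_add_disjoint V ?_,
      ih (fun i hi j hj hij =>
        h i (Finset.mem_cons_of_mem hi) j (Finset.mem_cons_of_mem hj) hij)]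
    have hsub : (∑ i ∈ s, F i).support ⊆ s.biUnion fun i => (F i).support :=
      MvPolynomial.support_sum
    refine Finset.disjoint_left.mpr fun μ hμa hμs => ?_
    obtain ⟨j, hj, hμj⟩ := Finset.mem_biUnion.mp (hsub hμs)
    exact Finset.disjoint_left.mp
      (h a (Finset.mem_cons_self a s) j (Finset.mem_cons_of_mem hj)
        (fun e => ha (e ▸ hj))) hμa hμj

/-- the scalar attached to each variable -/
def wgt (tcF tcG : ℕ × ℕ → K) : Vr → K := Sum.elim (Sum.elim tcF tcG) fun _ => 1

/-- canonical product of scalars determined by a monomial -/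
def Cp (tcF tcG : ℕ × ℕ → K) (μ : Vr →₀ ℕ) : K := μ.prod fun e n => wgt tcF tcG e ^ n

lemma Cp_add (tcF tcG : ℕ × ℕ → K) (μ₁ μ₂ : Vr →₀ ℕ) :
    Cp tcF tcG (μ₁ + μ₂) = Cp tcF tcG μ₁ * Cp tcF tcG μ₂ :=
  Finsupp.prod_add_index' (fun e => pow_zero _) (fun e m n => pow_add _ _ _)

lemma Cp_zero (tcF tcG : ℕ × ℕ → K) : Cp tcF tcG 0 = 1 :=
  Finsupp.prod_zero_index

lemma Cp_single (tcF tcG : ℕ × ℕ → K) (e : Vr) (n : ℕ) :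
    Cp tcF tcG (Finsupp.single e n) = wgt tcF tcG e ^ n :=
  Finsupp.prod_single_index (pow_zero _)

/-- every coefficient of `f` is a natural multiple of `c` times the canonical product -/
def Good (tcF tcG : ℕ × ℕ → K) (c : K) (f : MvPolynomial Vr K) : Prop :=
  ∀ μ, ∃ n : ℕ, f.coeff μ = (n : K) * (c * Cp tcF tcG μ)

lemma good_C (tcF tcG : ℕ × ℕ → K) (c : K) : Good tcF tcG c (MvPolynomial.C c) := by
  intro μ
  by_cases h : (0 : Vr →₀ ℕ) = μ
  · cases h
    exact ⟨1, by rw [coeff_C, if_pos rfl, Cp_zero]; ring⟩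
  · exact ⟨0, by rw [coeff_C, if_neg h]; simp⟩

lemma good_one (tcF tcG : ℕ × ℕ → K) : Good tcF tcG 1 (1 : MvPolynomial Vr K) := by
  have h := good_C tcF tcG (1 : K)
  rwa [map_one] at h

lemma good_mul {tcF tcG : ℕ × ℕ → K} {c : K} {f g : MvPolynomial Vr K}
    (hf : Good tcF tcG c f) (hg : Good tcF tcG 1 g) : Good tcF tcG c (f * g) := by
  intro μ
  have hterm : ∀ x ∈ Finset.HasAntidiagonal.antidiagonal μ, ∃ k : ℕ,
      f.coeff x.1 * g.coeff x.2 = (k : K) * (c * Cp tcF tcG μ) := by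
    intro x hx
    obtain ⟨n1, h1⟩ := hf x.1
    obtain ⟨n2, h2⟩ := hg x.2
    refine ⟨n1 * n2, ?_⟩
    rw [h1, h2, ← Finset.HasAntidiagonal.mem_antidiagonal.mp hx, Cp_add]
    push_cast
    ring
  choose n hn using hterm
  refine ⟨∑ x ∈ (Finset.HasAntidiagonal.antidiagonal μ).attach, n x.1 x.2, ?_⟩
  rw [MvPolynomial.coeff_mul,
    ← Finset.sum_attach (Finset.HasAntidiagonal.antidiagonal μ) (fun x => f.coeff x.1 * g.coeff x.2),
    Nat.cast_sum, Finset.sum_mul]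
  exact Finset.sum_congr rfl fun x _ => hn x.1 x.2

lemma tropMv_mul_good (V : Val K) (hv : ∀ n : ℕ, n ≠ 0 → V.v (n : K) = 0)
    {tcF tcG : ℕ × ℕ → K} {c : K} {f g : MvPolynomial Vr K}
    (hf : Good tcF tcG c f) (hg : Good tcF tcG 1 g) :
    tropMv V.v (f * g) = tropMv V.v f * tropMv V.v g := by
  ext μ
  rw [coeff_tropMv, MvPolynomial.coeff_mul, MvPolynomial.coeff_mul]
  have hco : ∀ x ∈ Finset.HasAntidiagonal.antidiagonal μ,
      (tropMv V.v f).coeff x.1 * (tropMv V.v g).coeff x.2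
        = trop (V.v (f.coeff x.1 * g.coeff x.2)) := by
    intro x _
    rw [coeff_tropMv, coeff_tropMv, V.v_mul]
    rfl
  rw [Finset.sum_congr rfl hco]
  apply untrop_injective
  rw [untrop_trop, Finset.untrop_sum',
    show (untrop ∘ fun x : (Vr →₀ ℕ) × (Vr →₀ ℕ) =>
        trop (V.v (f.coeff x.1 * g.coeff x.2)))
      = fun x : (Vr →₀ ℕ) × (Vr →₀ ℕ) => V.v (f.coeff x.1 * g.coeff x.2)
      from funext fun x => untrop_trop _]
  have hterm : ∀ x ∈ Finset.HasAntidiagonal.antidiagonal μ, ∃ k : ℕ,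
      f.coeff x.1 * g.coeff x.2 = (k : K) * (c * Cp tcF tcG μ) := by
    intro x hx
    obtain ⟨n1, h1⟩ := hf x.1
    obtain ⟨n2, h2⟩ := hg x.2
    refine ⟨n1 * n2, ?_⟩
    rw [h1, h2, ← Finset.HasAntidiagonal.mem_antidiagonal.mp hx, Cp_add]
    push_cast
    ring
  choose n hn using hterm
  have hsum : (∑ x ∈ Finset.HasAntidiagonal.antidiagonal μ, f.coeff x.1 * g.coeff x.2)
      = ((∑ x ∈ (Finset.HasAntidiagonal.antidiagonal μ).attach, n x.1 x.2 : ℕ) : K)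
          * (c * Cp tcF tcG μ) := by
    rw [← Finset.sum_attach (Finset.HasAntidiagonal.antidiagonal μ)
        (fun x => f.coeff x.1 * g.coeff x.2),
      Nat.cast_sum, Finset.sum_mul]
    exact Finset.sum_congr rfl fun x _ => hn x.1 x.2
  rw [hsum]
  by_cases hN : (∑ x ∈ (Finset.HasAntidiagonal.antidiagonal μ).attach, n x.1 x.2) = 0
  · rw [hN, Nat.cast_zero, zero_mul, v_zero]
    symm
    rw [Finset.inf_eq_top_iff]
    intro x hx
    have h0 : n x hx = 0 := by
      have := (Finset.sum_eq_zero_iff.mp hN) ⟨x, hx⟩ (Finset.mem_attach _ _)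
      simpa using this
    rw [hn x hx, h0, Nat.cast_zero, zero_mul, v_zero]
  · rw [V.v_mul, hv _ hN, zero_add]
    refine le_antisymm (Finset.le_inf ?_) ?_
    · intro x hx
      by_cases h0 : n x hx = 0
      · rw [hn x hx, h0, Nat.cast_zero, zero_mul, v_zero]
        exact le_top
      · rw [hn x hx, V.v_mul ((n x hx : ℕ) : K) (c * Cp tcF tcG μ), hv _ h0, zero_add]
    · obtain ⟨x, _, hnx⟩ := Finset.exists_ne_zero_of_sum_ne_zero hN
      have hle := Finset.inf_le
        (f := fun z : (Vr →₀ ℕ) × (Vr →₀ ℕ) => V.v (f.coeff z.1 * g.coeff z.2)) x.2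
      refine le_trans hle ?_
      show V.v (f.coeff x.1.1 * g.coeff x.1.2) ≤ _
      rw [hn x.1 x.2,
        V.v_mul ((n x.1 x.2 : ℕ) : K) (c * Cp tcF tcG μ), hv _ hnx, zero_add]

lemma good_sum_terms (tcF tcG : ℕ × ℕ → K) (S : Finset ℕ) (a : ℕ → Vr) (tc : ℕ → K)
    (ha : ∀ k, wgt tcF tcG (a k) = tc k) (hay : ∀ k, a k ≠ Sum.inr ()) :
    Good tcF tcG 1 (∑ k ∈ S, MvPolynomial.C (tc k) * X (a k)
      * X (Sum.inr () : Vr) ^ k) := by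
  intro μ
  rw [Finset.sum_congr rfl fun k _ => term_eq (tc k) (a k) (Sum.inr ()) k,
    MvPolynomial.coeff_sum]
  simp only [coeff_monomial]
  by_cases hex : ∃ k ∈ S, Finsupp.single (a k) 1
      + Finsupp.single (Sum.inr () : Vr) k = μ
  · obtain ⟨k0, hk0, hk0eq⟩ := hex
    refine ⟨1, ?_⟩
    rw [Finset.sum_eq_single_of_mem k0 hk0 ?_]
    · rw [if_pos hk0eq, ← hk0eq, Cp_add, Cp_single, Cp_single, ha,
        show wgt tcF tcG (Sum.inr () : Vr) = 1 from rfl]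
      simp
    · intro b hb hbne
      rw [if_neg]
      intro hbeq
      apply hbne
      have h2 := congrArg (fun ν : Vr →₀ ℕ => ν (Sum.inr ())) (hbeq.trans hk0eq.symm)
      simpa [Finsupp.single_apply, hay b, hay k0] using h2
  · refine ⟨0, ?_⟩
    rw [Finset.sum_eq_zero, Nat.cast_zero, zero_mul]
    intro k hk
    rw [if_neg (fun h => hex ⟨k, hk, h⟩)]

lemma good_subs (SF SG : ℕ → Finset ℕ) (tcF tcG : ℕ × ℕ → K) (s : ℕ ⊕ ℕ) :
    Good tcF tcG 1 (subsAlg SF SG tcF tcG s) := by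
  cases s with
  | inl i =>
    exact good_sum_terms tcF tcG (SF i) (fun k => Sum.inl (Sum.inl (i, k)))
      (fun k => tcF (i, k)) (fun k => rfl) (fun k => by simp)
  | inr j =>
    exact good_sum_terms tcF tcG (SG j) (fun q => Sum.inl (Sum.inr (j, q)))
      (fun q => tcG (j, q)) (fun q => rfl) (fun q => by simp)


lemma good_trop_pow (V : Val K) (hv : ∀ n : ℕ, n ≠ 0 → V.v (n : K) = 0)
    {tcF tcG : ℕ × ℕ → K} {f : MvPolynomial Vr K}
    (hf : Good tcF tcG 1 f) (k : ℕ) :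
    Good tcF tcG 1 (f ^ k) ∧ tropMv V.v (f ^ k) = tropMv V.v f ^ k := by
  induction k with
  | zero =>
    constructor
    · rw [pow_zero]; exact good_one tcF tcG
    · rw [pow_zero, pow_zero, tropMv_one]
  | succ k ih =>
    constructor
    · rw [pow_succ]; exact good_mul ih.1 hf
    · rw [pow_succ, pow_succ, tropMv_mul_good V hv ih.1 hf, ih.2]

lemma good_trop_prod (V : Val K) (hv : ∀ n : ℕ, n ≠ 0 → V.v (n : K) = 0)
    {tcF tcG : ℕ × ℕ → K} {ι : Type} (s : Finset ι)
    (F : ι → MvPolynomial Vr K) (hF : ∀ b ∈ s, Good tcF tcG 1 (F b)) :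
    Good tcF tcG 1 (∏ b ∈ s, F b)
      ∧ tropMv V.v (∏ b ∈ s, F b) = ∏ b ∈ s, tropMv V.v (F b) := by
  induction s using Finset.cons_induction with
  | empty =>
    constructor
    · rw [Finset.prod_empty]; exact good_one tcF tcG
    · rw [Finset.prod_empty, Finset.prod_empty, tropMv_one]
  | cons b s hb ih =>
    have ihs := ih fun x hx => hF x (Finset.mem_cons_of_mem hx)
    have hGb := hF b (Finset.mem_cons_self b s)
    constructor
    · rw [Finset.prod_cons]; exact good_mul hGb ihs.1
    · rw [Finset.prod_cons, Finset.prod_cons, tropMv_mul_good V hv hGb ihs.1, ihs.2]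

lemma trop_aeval_monomial (V : Val K) (hv : ∀ n : ℕ, n ≠ 0 → V.v (n : K) = 0)
    (SF SG : ℕ → Finset ℕ) (tcF tcG : ℕ × ℕ → K) (m : (ℕ ⊕ ℕ) →₀ ℕ) (c : K) :
    tropMv V.v (MvPolynomial.aeval (subsAlg SF SG tcF tcG) (monomial m c))
      = MvPolynomial.C (trop (V.v c))
          * ∏ s ∈ m.support, tropMv V.v (subsAlg SF SG tcF tcG s) ^ m s := by
  rw [aeval_monomial, MvPolynomial.algebraMap_eq]
  have hprod := good_trop_prod V hv m.support
    (fun s => subsAlg SF SG tcF tcG s ^ m s)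
    (fun s _ => (good_trop_pow V hv (good_subs SF SG tcF tcG s) (m s)).1)
  have hP : (m.prod fun s k => subsAlg SF SG tcF tcG s ^ k)
      = ∏ s ∈ m.support, subsAlg SF SG tcF tcG s ^ m s := rfl
  rw [hP, tropMv_mul_good V hv (good_C tcF tcG c) hprod.1, tropMv_C, hprod.2]
  congr 1
  exact Finset.prod_congr rfl fun s _ =>
    (good_trop_pow V hv (good_subs SF SG tcF tcG s) (m s)).2

end Stmt17

/-- **no cancellation of terms in the substitution, and compatibility of
tropicalization with composition.**
Let `P(a_i, b_j)` be a polynomial over `𝕂`, homogeneous in the variables `(a_i)_{i∈I}` and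
homogeneous in the variables `(b_j)_{j∈J}` (for instance a resultant `R(I,J,𝕂)`).
Substitute each `a_i` by `f̃_i = Σ_k A_{ik} t^{−ν_{ik}} y^k` and each `b_j` by
`g̃_j = Σ_q B_{jq} t^{−η_{jq}} y^q`, the `A_{ik}`, `B_{jq}` being independent indeterminates.
Then:
* no cancellation of terms occurs: two distinct monomials of `P` give rise, after
  substitution and expansion, to disjoint sets of monomials in the variables
  `A_{ik}`, `B_{jq}`, `y`;
* consequently, when the residue field has characteristic zero (i.e. nonzero integers have
  valuation `0`), the tropicalization of `P(f̃_i, g̃_j)` equals the evaluation of the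
  tropicalization of `P` at the tropicalizations of the `f̃_i`, `g̃_j`. -/
theorem no_cancellation_and_trop_of_composition
    {K : Type} [Field K] (V : Val K)
    (I J : Finset ℕ) (P : MvPolynomial (ℕ ⊕ ℕ) K)
    (hvars : ∀ m ∈ P.support, ∀ s, m s ≠ 0 →
      (∃ i ∈ I, s = Sum.inl i) ∨ (∃ j ∈ J, s = Sum.inr j))
    -- `P` is homogeneous in the `a`-variables and in the `b`-variables
    (da db : ℕ)
    (hhomA : ∀ m ∈ P.support, (∑ i ∈ I, m (Sum.inl i)) = da)
    (hhomB : ∀ m ∈ P.support, (∑ j ∈ J, m (Sum.inr j)) = db)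
    (SF SG : ℕ → Finset ℕ) (tcF tcG : ℕ × ℕ → K)
    (htcF : ∀ p, tcF p ≠ 0) (htcG : ∀ p, tcG p ≠ 0) :
    (∀ m₁ ∈ P.support, ∀ m₂ ∈ P.support, m₁ ≠ m₂ →
      Disjoint
        ((MvPolynomial.aeval (subsAlg SF SG tcF tcG)
          (MvPolynomial.monomial m₁ (1 : K))).support)
        ((MvPolynomial.aeval (subsAlg SF SG tcF tcG)
          (MvPolynomial.monomial m₂ (1 : K))).support)) ∧
    -- if the residue field has characteristic zero, tropicalization commutes with
    -- the substitution
    ((∀ n : ℕ, n ≠ 0 → V.v (n : K) = 0) →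
      tropMv V.v (MvPolynomial.aeval (subsAlg SF SG tcF tcG) P) =
        MvPolynomial.aeval (fun s => tropMv V.v (subsAlg SF SG tcF tcG s))
          (tropMv V.v P)) := by
  constructor
  · intro m₁ _ m₂ _ hne
    exact Stmt17.part1 SF SG tcF tcG hne
  · intro hv
    have key : ∀ m : (ℕ ⊕ ℕ) →₀ ℕ,
        (MvPolynomial.aeval (subsAlg SF SG tcF tcG)
          (MvPolynomial.monomial m (P.coeff m))).support
        ⊆ (MvPolynomial.aeval (subsAlg SF SG tcF tcG)
          (MvPolynomial.monomial m (1 : K))).support := by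
      intro m
      have h1 : MvPolynomial.C (P.coeff m) * MvPolynomial.monomial m (1 : K)
          = MvPolynomial.monomial m (P.coeff m) := by
        rw [MvPolynomial.C_mul_monomial, mul_one]
      rw [← h1, map_mul, MvPolynomial.aeval_C, MvPolynomial.algebraMap_eq,
        ← MvPolynomial.smul_eq_C_mul]
      exact MvPolynomial.support_smul
    have hdis : ∀ m₁ ∈ P.support, ∀ m₂ ∈ P.support, m₁ ≠ m₂ →
        Disjoint (MvPolynomial.aeval (subsAlg SF SG tcF tcG)
            (MvPolynomial.monomial m₁ (P.coeff m₁))).support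
          (MvPolynomial.aeval (subsAlg SF SG tcF tcG)
            (MvPolynomial.monomial m₂ (P.coeff m₂))).support := by
      intro m₁ _ m₂ _ hne
      exact Finset.disjoint_of_subset_left (key m₁)
        (Finset.disjoint_of_subset_right (key m₂) (Stmt17.part1 SF SG tcF tcG hne))
    have e1 : MvPolynomial.aeval (subsAlg SF SG tcF tcG) P
        = ∑ m ∈ P.support, MvPolynomial.aeval (subsAlg SF SG tcF tcG)
            (MvPolynomial.monomial m (P.coeff m)) := by
      conv_lhs => rw [← MvPolynomial.support_sum_monomial_coeff P]
      rw [map_sum]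
    have hL : tropMv V.v (MvPolynomial.aeval (subsAlg SF SG tcF tcG) P)
        = ∑ m ∈ P.support, MvPolynomial.C (Tropical.trop (V.v (P.coeff m)))
            * ∏ s ∈ m.support, tropMv V.v (subsAlg SF SG tcF tcG s) ^ m s := by
      rw [e1, Stmt17.tropMv_sum_disjoint V P.support
        (fun m => MvPolynomial.aeval (subsAlg SF SG tcF tcG)
          (MvPolynomial.monomial m (P.coeff m))) hdis]
      exact Finset.sum_congr rfl fun m _ =>
        Stmt17.trop_aeval_monomial V hv SF SG tcF tcG m (P.coeff m)
    have hR : MvPolynomial.aeval (fun s => tropMv V.v (subsAlg SF SG tcF tcG s))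
          (tropMv V.v P)
        = ∑ m ∈ P.support, MvPolynomial.C (Tropical.trop (V.v (P.coeff m)))
            * ∏ s ∈ m.support, tropMv V.v (subsAlg SF SG tcF tcG s) ^ m s := by
      have hP : tropMv V.v P = ∑ m ∈ P.support,
          MvPolynomial.monomial m (Tropical.trop (V.v (P.coeff m))) := rfl
      rw [hP, map_sum]
      refine Finset.sum_congr rfl fun m _ => ?_
      rw [MvPolynomial.aeval_monomial, MvPolynomial.algebraMap_eq]
      rfl
    rw [hL, hR]
end
end
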